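/- arXiv:1502.01255 — 3 statements merged into one kernel-verified Lean document; each statement's English description precedes it below -/
import Mathlib

section
/- Let G be a finite (possibly vertex-colored) simple graph satisfying Conditions A–F: (A) for every cell X ∈ Π_G, G[X] is empty, complete, a matching graph mK_2, the complement of a matching graph, or the 5-cycle; (B) for any two distinct cells X, Y ∈ Π_G, G[X,Y] is empty, complete bipartite, a disjoint union of stars sK_{1,t} (with one of X, Y the centers and the other the leaves), or the bipartite complement of such a graph; (C) C(G) contains no uniform anisotropic path connecting two heterogeneous cells; (D) C(G) contains no uniform anisotropic cycle; (E) C(G) contains neither an anisotropic path X Y_1 … Y_l Z with |X| < |Y_1| = … = |Y_l| > |Z| nor an anisotropic cycle X Y_1 … Y_l X with |X| < |Y_1| = … = |Y_l|; (F) C(G) contains no anisotropic path X Y_1 … Y_l with |X| < |Y_1| = … = |Y_l| and Y_l heterogeneous. Then for any anisotropic component A of C(G): (G) A is a tree, and if A is rooted at any cell R of minimum cardinality in A, then |X| ≤ |Y| for every edge (X,Y) of the rooted tree directed away from R; and (H) A contains at most one heterogeneous cell, and if R is such a cell, it has minimum cardinality among the cells of A. -/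
namespace ColorRef

variable {V W : Type}

/-- `crRel G c i u v` means vertices `u` and `v` get the same color in round `i`
of color refinement on `G` with initial coloring `c`. -/
def crRel (G : SimpleGraph V) {α : Type} (c : V → α) : ℕ → V → V → Prop
  | 0 => fun u v => c u = c v
  | (i + 1) => fun u v => crRel G c i u v ∧
      ∀ w : V, {a : V | G.Adj u a ∧ crRel G c i a w}.ncard =
               {a : V | G.Adj v a ∧ crRel G c i a w}.ncard

/-- `u` and `v` get the same color in the stable coloring. -/
def stableRel (G : SimpleGraph V) {α : Type} (c : V → α) (u v : V) : Prop :=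
  ∀ i : ℕ, crRel G c i u v

/-- `X` is a cell of the stable partition of `(G, c)`. -/
def IsCell (G : SimpleGraph V) {α : Type} (c : V → α) (X : Set V) : Prop :=
  ∃ u : V, X = {v : V | stableRel G c u v}

/-- The multisets of round-`i` colors on the two sides of the disjoint union `G ⊕g H`
coincide for every `i`, i.e. color refinement does not distinguish `G` and `H`. -/
def crIndist (G : SimpleGraph V) (cG : V → ℕ) (H : SimpleGraph W) (cH : W → ℕ) : Prop :=
  ∀ (i : ℕ) (w : V ⊕ W),
    {u : V | crRel (G ⊕g H) (Sum.elim cG cH) i (Sum.inl u) w}.ncard =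
    {v : W | crRel (G ⊕g H) (Sum.elim cG cH) i (Sum.inr v) w}.ncard

/-- `G` (with coloring `cG`) is amenable: any finite colored graph `H` that color
refinement fails to distinguish from `G` is color-preservingly isomorphic to `G`. -/
def Amenable (G : SimpleGraph V) (cG : V → ℕ) : Prop :=
  ∀ (W : Type) (_ : Fintype W) (H : SimpleGraph W) (cH : W → ℕ),
    crIndist G cG H cH → ∃ φ : G ≃g H, ∀ v : V, cH (φ v) = cG v

/-! ### Induced subgraphs on cells and between cells -/

def CellEmpty (G : SimpleGraph V) (X : Set V) : Prop := ∀ u ∈ X, ∀ v ∈ X, ¬ G.Adj u v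

def CellComplete (G : SimpleGraph V) (X : Set V) : Prop :=
  ∀ u ∈ X, ∀ v ∈ X, u ≠ v → G.Adj u v

/-- `G[X]` is a perfect matching `mK₂` on `X`. -/
def CellMatching (G : SimpleGraph V) (X : Set V) : Prop :=
  ∀ u ∈ X, {v : V | v ∈ X ∧ G.Adj u v}.ncard = 1

/-- `G[X]` is the complement of a perfect matching on `X`. -/
def CellCoMatching (G : SimpleGraph V) (X : Set V) : Prop :=
  ∀ u ∈ X, {v : V | v ∈ X ∧ v ≠ u ∧ ¬ G.Adj u v}.ncard = 1

/-- `G[X]` is the 5-cycle (a 2-regular graph on 5 vertices). -/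
def CellC5 (G : SimpleGraph V) (X : Set V) : Prop :=
  X.ncard = 5 ∧ ∀ u ∈ X, {v : V | v ∈ X ∧ G.Adj u v}.ncard = 2

/-- Condition A. -/
def CondA (G : SimpleGraph V) {α : Type} (c : V → α) : Prop :=
  ∀ X : Set V, IsCell G c X →
    CellEmpty G X ∨ CellComplete G X ∨ CellMatching G X ∨ CellCoMatching G X ∨ CellC5 G X

def BipEmpty (G : SimpleGraph V) (X Y : Set V) : Prop := ∀ u ∈ X, ∀ v ∈ Y, ¬ G.Adj u v

def BipComplete (G : SimpleGraph V) (X Y : Set V) : Prop := ∀ u ∈ X, ∀ v ∈ Y, G.Adj u v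

/-- `G[X,Y]` is a disjoint union of stars `sK_{1,t}` with centers `X` and leaves `Y`. -/
def BipStars (G : SimpleGraph V) (X Y : Set V) : Prop :=
  (∀ v ∈ Y, {u : V | u ∈ X ∧ G.Adj u v}.ncard = 1) ∧
  (∃ t : ℕ, ∀ u ∈ X, {v : V | v ∈ Y ∧ G.Adj u v}.ncard = t)

/-- `G[X,Y]` is the bipartite complement of a disjoint union of stars with centers `X`. -/
def BipCoStars (G : SimpleGraph V) (X Y : Set V) : Prop :=
  (∀ v ∈ Y, {u : V | u ∈ X ∧ ¬ G.Adj u v}.ncard = 1) ∧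
  (∃ t : ℕ, ∀ u ∈ X, {v : V | v ∈ Y ∧ ¬ G.Adj u v}.ncard = t)

/-- Condition B. -/
def CondB (G : SimpleGraph V) {α : Type} (c : V → α) : Prop :=
  ∀ X Y : Set V, IsCell G c X → IsCell G c Y → X ≠ Y →
    BipEmpty G X Y ∨ BipComplete G X Y ∨
    BipStars G X Y ∨ BipStars G Y X ∨ BipCoStars G X Y ∨ BipCoStars G Y X

/-- A cell is heterogeneous if the graph it induces is neither complete nor empty. -/
def Hetero (G : SimpleGraph V) (X : Set V) : Prop :=
  ¬ CellEmpty G X ∧ ¬ CellComplete G X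

/-- `{X, Y}` is an anisotropic edge of the cell graph. -/
def AnisoEdge (G : SimpleGraph V) {α : Type} (c : V → α) (X Y : Set V) : Prop :=
  IsCell G c X ∧ IsCell G c Y ∧ X ≠ Y ∧ ¬ BipEmpty G X Y ∧ ¬ BipComplete G X Y

/-- An anisotropic path in the cell graph, given as the list of its cells. -/
def AnisoPath (G : SimpleGraph V) {α : Type} (c : V → α) (L : List (Set V)) : Prop :=
  (∀ X ∈ L, IsCell G c X) ∧ L.Nodup ∧ L.Chain' (AnisoEdge G c)

/-- Condition C: no uniform anisotropic path connects two heterogeneous cells. -/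
def CondC (G : SimpleGraph V) {α : Type} (c : V → α) : Prop :=
  ¬ ∃ (X Y : Set V) (L : List (Set V)) (k : ℕ),
      AnisoPath G c (X :: (L ++ [Y])) ∧
      (∀ Z ∈ X :: (L ++ [Y]), Z.ncard = k) ∧
      Hetero G X ∧ Hetero G Y

/-- Condition D: the cell graph has no uniform anisotropic cycle. -/
def CondD (G : SimpleGraph V) {α : Type} (c : V → α) : Prop :=
  ¬ ∃ (X : Set V) (L : List (Set V)) (k : ℕ),
      3 ≤ (X :: L).length ∧
      AnisoPath G c (X :: L) ∧
      List.Chain' (AnisoEdge G c) ((X :: L) ++ [X]) ∧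
      (∀ Z ∈ X :: L, Z.ncard = k)

/-- Condition E: no anisotropic path `X Y₁ … Y_l Z` with `|X| < |Y₁| = … = |Y_l| > |Z|`
and no anisotropic cycle `X Y₁ … Y_l X` with `|X| < |Y₁| = … = |Y_l|`. -/
def CondE (G : SimpleGraph V) {α : Type} (c : V → α) : Prop :=
  (¬ ∃ (X Z : Set V) (Ys : List (Set V)) (k : ℕ),
      Ys ≠ [] ∧
      AnisoPath G c (X :: (Ys ++ [Z])) ∧
      (∀ Y ∈ Ys, Y.ncard = k) ∧ X.ncard < k ∧ Z.ncard < k) ∧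
  (¬ ∃ (X : Set V) (Ys : List (Set V)) (k : ℕ),
      2 ≤ Ys.length ∧
      AnisoPath G c (X :: Ys) ∧
      List.Chain' (AnisoEdge G c) ((X :: Ys) ++ [X]) ∧
      (∀ Y ∈ Ys, Y.ncard = k) ∧ X.ncard < k)

/-- Condition F: no anisotropic path `X Y₁ … Y_l` with `|X| < |Y₁| = … = |Y_l|`
whose last cell `Y_l` is heterogeneous. -/
def CondF (G : SimpleGraph V) {α : Type} (c : V → α) : Prop :=
  ¬ ∃ (X : Set V) (Ys : List (Set V)) (Yl : Set V) (k : ℕ),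
      Ys ≠ [] ∧
      AnisoPath G c (X :: Ys) ∧
      (∀ Y ∈ Ys, Y.ncard = k) ∧ X.ncard < k ∧
      Ys.getLast? = some Yl ∧ Hetero G Yl

/-- The type of cells of the stable partition. -/
def Cell (G : SimpleGraph V) {α : Type} (c : V → α) : Type := {X : Set V // IsCell G c X}

/-- The graph on the cells of `Π_G` formed by the anisotropic edges of the cell graph;
its connected components are the anisotropic components of `C(G)`. -/
def anisoGraph (G : SimpleGraph V) {α : Type} (c : V → α) : SimpleGraph (Cell G c) where
  Adj A B := AnisoEdge G c A.val B.val
  symm := by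
    constructor
    rintro A B ⟨h1, h2, h3, h4, h5⟩
    refine ⟨h2, h1, Ne.symm h3, fun h => h4 ?_, fun h => h5 ?_⟩
    · exact fun u hu v hv hadj => h v hv u hu hadj.symm
    · exact fun u hu v hv => (h v hv u hu).symm
  loopless := ⟨fun A h => h.2.2.1 rfl⟩

/-- Condition G: every anisotropic component is a tree, and rooting it at any cell `R`
of minimum cardinality in its component, `|X| ≤ |Y|` along edges directed away from `R`. -/
def CondG (G : SimpleGraph V) {α : Type} (c : V → α) : Prop :=
  (anisoGraph G c).IsAcyclic ∧
  ∀ R X Y : Cell G c,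
    (∀ Z : Cell G c, (anisoGraph G c).Reachable R Z → R.val.ncard ≤ Z.val.ncard) →
    (anisoGraph G c).Reachable R X →
    (anisoGraph G c).Adj X Y →
    (anisoGraph G c).dist R Y = (anisoGraph G c).dist R X + 1 →
    X.val.ncard ≤ Y.val.ncard

/-- Condition H: every anisotropic component contains at most one heterogeneous cell,
and such a cell has minimum cardinality within its component. -/
def CondH (G : SimpleGraph V) {α : Type} (c : V → α) : Prop :=
  (∀ X Y : Cell G c, Hetero G X.val → Hetero G Y.val →
      (anisoGraph G c).Reachable X Y → X = Y) ∧
  (∀ X Z : Cell G c, Hetero G X.val →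
      (anisoGraph G c).Reachable X Z → X.val.ncard ≤ Z.val.ncard)

/-! ### Matrices, fractional automorphisms and compactness -/

open Classical in
/-- The real adjacency matrix of `G`. -/
noncomputable def adjMat (G : SimpleGraph V) : Matrix V V ℝ :=
  Matrix.of fun u v => if G.Adj u v then (1 : ℝ) else 0

open Classical in
/-- The permutation matrix of a permutation `σ`. -/
noncomputable def permMat (σ : Equiv.Perm V) : Matrix V V ℝ :=
  Matrix.of fun i j => if σ j = i then (1 : ℝ) else 0

def IsDoublyStochastic [Fintype V] (X : Matrix V V ℝ) : Prop :=
  (∀ i j, 0 ≤ X i j) ∧ (∀ i, ∑ j, X i j = 1) ∧ (∀ j, ∑ i, X i j = 1)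

def IsAutomorphism (G : SimpleGraph V) (σ : Equiv.Perm V) : Prop :=
  ∀ u v : V, G.Adj (σ u) (σ v) ↔ G.Adj u v

/-- `X` is a convex combination of permutation matrices of automorphisms of `G`. -/
def IsConvexCombOfAut [Fintype V] (G : SimpleGraph V) (X : Matrix V V ℝ) : Prop :=
  ∃ (s : Finset (Equiv.Perm V)) (w : Equiv.Perm V → ℝ),
    (∀ σ ∈ s, IsAutomorphism G σ) ∧ (∀ σ ∈ s, 0 ≤ w σ) ∧
    (∑ σ ∈ s, w σ) = 1 ∧ X = ∑ σ ∈ s, w σ • permMat σ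

/-- `G` is compact: the polytope of fractional automorphisms of `G` is the convex hull
of the permutation matrices of automorphisms of `G`. -/
def CompactGraph [Fintype V] (G : SimpleGraph V) : Prop :=
  ∀ X : Matrix V V ℝ, IsDoublyStochastic X → adjMat G * X = X * adjMat G →
    IsConvexCombOfAut G X

/-! ### Equitable partitions, Godsil, Tinhofer, refinable, discrete, unigraphs -/

/-- The partition given by the classes of the equivalence `r` is equitable. -/
def Equitable (G : SimpleGraph V) (r : V → V → Prop) : Prop :=
  ∀ u v w : V, r u v →
    {a : V | G.Adj u a ∧ r a w}.ncard = {a : V | G.Adj v a ∧ r a w}.ncard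

/-- The partition given by `r` is the orbit partition of a subgroup of `Aut(G)`. -/
def IsOrbitPartition (G : SimpleGraph V) (r : V → V → Prop) : Prop :=
  ∃ S : Subgroup (Equiv.Perm V), (∀ σ ∈ S, IsAutomorphism G σ) ∧
    (∀ u v : V, r u v ↔ ∃ σ ∈ S, σ u = v)

/-- `G` is a Godsil graph. -/
def Godsil (G : SimpleGraph V) : Prop :=
  ∀ r : V → V → Prop, Equivalence r → Equitable G r → IsOrbitPartition G r

open Classical in
/-- The coloring of the disjoint union after individualizing the pairs in `F`:
the `j`-th individualized pair gets fresh color `some j`, all other vertices keep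
their (uniform) original color `none`. -/
noncomputable def tinColor (F : List (V × W)) : V ⊕ W → Option ℕ
  | Sum.inl u => F.findIdx? (fun p => decide (p.1 = u))
  | Sum.inr v => F.findIdx? (fun p => decide (p.2 = v))

/-- The stable coloring relation on `G ⊕g H` after individualizing the pairs in `F`. -/
def tinRel (G : SimpleGraph V) (H : SimpleGraph W) (F : List (V × W)) :
    (V ⊕ W) → (V ⊕ W) → Prop :=
  stableRel (G ⊕g H) (tinColor F)

/-- The multisets of stable colors on the two sides agree after individualizing `F`. -/
def tinIndist (G : SimpleGraph V) (H : SimpleGraph W) (F : List (V × W)) : Prop :=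
  ∀ w : V ⊕ W,
    {u : V | tinRel G H F (Sum.inl u) w}.ncard =
    {v : W | tinRel G H F (Sum.inr v) w}.ncard

/-- The pair `p` is a legal individualization choice at the stage reached after `F`. -/
def ValidStep (G : SimpleGraph V) (H : SimpleGraph W) (F : List (V × W)) (p : V × W) : Prop :=
  tinIndist G H F ∧
  tinRel G H F (Sum.inl p.1) (Sum.inr p.2) ∧
  2 ≤ {u' : V | tinRel G H F (Sum.inl u') (Sum.inl p.1)}.ncard ∧
  2 ≤ {v' : W | tinRel G H F (Sum.inr v') (Sum.inr p.2)}.ncard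

/-- `F` is a legal sequence of individualization choices of Tinhofer's algorithm. -/
def ValidRun (G : SimpleGraph V) (H : SimpleGraph W) (F : List (V × W)) : Prop :=
  ∀ j : Fin F.length, ValidStep G H (F.take j.val) (F.get j)

/-- After `F`, all stable color classes are singletons in `G` and in `H`. -/
def AllSingletons (G : SimpleGraph V) (H : SimpleGraph W) (F : List (V × W)) : Prop :=
  (∀ u u' : V, tinRel G H F (Sum.inl u) (Sum.inl u') → u = u') ∧
  (∀ v v' : W, tinRel G H F (Sum.inr v) (Sum.inr v') → v = v')

/-- After `F`, Tinhofer's algorithm stops. -/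
def TinTerminal (G : SimpleGraph V) (H : SimpleGraph W) (F : List (V × W)) : Prop :=
  ¬ tinIndist G H F ∨ AllSingletons G H F

/-- After `F`, Tinhofer's algorithm outputs "isomorphic": the color multisets agree,
all classes are singletons, and the color-matching map is an isomorphism. -/
def TinOutputIso (G : SimpleGraph V) (H : SimpleGraph W) (F : List (V × W)) : Prop :=
  tinIndist G H F ∧ AllSingletons G H F ∧
  (∀ (u u' : V) (v v' : W), tinRel G H F (Sum.inl u) (Sum.inr v) →
     tinRel G H F (Sum.inl u') (Sum.inr v') → (G.Adj u u' ↔ H.Adj v v'))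

/-- `G` is a Tinhofer graph: for every finite `H` and every legal complete run of
Tinhofer's individualization-refinement algorithm, the output is correct. -/
def Tinhofer (G : SimpleGraph V) : Prop :=
  ∀ (W : Type) (_ : Fintype W) (H : SimpleGraph W) (F : List (V × W)),
    ValidRun G H F → TinTerminal G H F →
    (TinOutputIso G H F ↔ Nonempty (G ≃g H))

/-- `G` is refinable: its stable partition is the orbit partition of `Aut(G)`. -/
def Refinable (G : SimpleGraph V) : Prop :=
  ∀ u v : V, stableRel G (fun _ => (0 : ℕ)) u v ↔
    ∃ σ : Equiv.Perm V, IsAutomorphism G σ ∧ σ u = v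

/-- `G` is discrete: the stable partition consists of singletons. -/
def Discrete (G : SimpleGraph V) : Prop :=
  ∀ u v : V, stableRel G (fun _ => (0 : ℕ)) u v → u = v

/-- `G` is a unigraph: it is determined up to isomorphism by its degree sequence. -/
def Unigraph (G : SimpleGraph V) : Prop :=
  ∀ (W : Type) (_ : Fintype W) (H : SimpleGraph W),
    (∃ e : V ≃ W, ∀ v : V, {w : W | H.Adj (e v) w}.ncard = {u : V | G.Adj v u}.ncard) →
    Nonempty (G ≃g H)

/-! ### Concrete graphs -/

/-- The cycle graph on `n` vertices. -/
def cycleG (n : ℕ) : SimpleGraph (Fin n) :=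
  SimpleGraph.fromRel (fun u v => (u.val + 1) % n = v.val)

/-- The Petersen graph as the Kneser graph `K(5,2)`. -/
def petersen : SimpleGraph {s : Finset (Fin 5) // s.card = 2} where
  Adj a b := Disjoint a.val b.val
  symm := ⟨fun _ _ h => h.symm⟩
  loopless := by
    constructor
    intro a h
    have h' : Disjoint a.val a.val := h
    rw [disjoint_self] at h'
    have h2 := a.2
    rw [h'] at h2
    simp at h2

/-- The Johnson graph `J(n,2)`. -/
def johnson (n : ℕ) : SimpleGraph {s : Finset (Fin n) // s.card = 2} where
  Adj a b := (a.val ∩ b.val).card = 1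
  symm := by
    constructor
    intro a b h
    have h' : (a.val ∩ b.val).card = 1 := h
    show (b.val ∩ a.val).card = 1
    rwa [Finset.inter_comm]
  loopless := by
    constructor
    intro a h
    have h' : (a.val ∩ a.val).card = 1 := h
    rw [Finset.inter_self, a.2] at h'
    omega

/-- The cell (as an element of the cell type) containing vertex `u`. -/
def vcell (G : SimpleGraph V) {α : Type} (c : V → α) (u : V) : Cell G c :=
  ⟨{v : V | stableRel G c u v}, ⟨u, rfl⟩⟩

/-- `u` and `v` lie in cells of the same anisotropic component. -/
def SameAnisoComp (G : SimpleGraph V) {α : Type} (c : V → α) (u v : V) : Prop :=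
  (anisoGraph G c).Reachable (vcell G c u) (vcell G c v)


/-! ### Auxiliary lemmas for Statement 3 -/

section Proof3

open List

variable {β : Type} {G : SimpleGraph V}

private lemma anisoEdge_symm' {c : V → β} {X Y : Set V} (h : AnisoEdge G c X Y) :
    AnisoEdge G c Y X := by
  obtain ⟨h1, h2, h3, h4, h5⟩ := h
  refine ⟨h2, h1, Ne.symm h3, fun h => h4 ?_, fun h => h5 ?_⟩
  · exact fun u hu v hv hadj => h v hv u hu hadj.symm
  · exact fun u hu v hv => (h v hv u hu).symm

private lemma anisoPath_infix {c : V → β} {L L' : List (Set V)}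
    (h : AnisoPath G c L) (h' : L' <:+: L) : AnisoPath G c L' :=
  ⟨fun X hX => h.1 X (h'.subset hX), List.Nodup.sublist h'.sublist h.2.1, h.2.2.infix h'⟩

private lemma exists_max_cell : ∀ L : List (Set V), L ≠ [] →
    ∃ M ∈ L, ∀ Z ∈ L, Z.ncard ≤ M.ncard := by
  intro L
  induction L with
  | nil => simp
  | cons a t ih =>
    intro _
    rcases eq_or_ne t [] with rfl | ht
    · exact ⟨a, by simp, by simp⟩
    · obtain ⟨M, hM, hle⟩ := ih ht
      rcases le_total a.ncard M.ncard with h1 | h1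
      · refine ⟨M, mem_cons_of_mem _ hM, ?_⟩
        intro Z hZ
        rcases mem_cons.mp hZ with rfl | hZ
        · exact h1
        · exact hle Z hZ
      · refine ⟨a, mem_cons_self, ?_⟩
        intro Z hZ
        rcases mem_cons.mp hZ with rfl | hZ
        · exact le_rfl
        · exact (hle Z hZ).trans h1

private lemma span_spec {α : Type} (p : α → Prop) [DecidablePred p] :
    ∀ l : List α, ∃ ys rest : List α, l = ys ++ rest ∧ (∀ y ∈ ys, p y) ∧
      (∀ b ∈ rest.head?, ¬ p b) ∧ (∀ h ∈ l.head?, p h → ys ≠ []) := by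
  intro l
  induction l with
  | nil => refine ⟨[], [], rfl, ?_, ?_, ?_⟩ <;> simp
  | cons a t ih =>
    obtain ⟨ys, rest, h1, h2, h3, _⟩ := ih
    by_cases hpa : p a
    · refine ⟨a :: ys, rest, by simp [h1], ?_, h3, by simp⟩
      intro y hy
      rcases mem_cons.mp hy with rfl | hy
      · exact hpa
      · exact h2 y hy
    · exact ⟨[], a :: t, rfl, by simp, by simpa using hpa, by simp [hpa]⟩

private lemma exists_run {α : Type} (p : α → Prop) [DecidablePred p] :
    ∀ l : List α, (∀ h ∈ l.head?, ¬ p h) → (∃ x ∈ l, p x) →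
    ∃ (pre : List α) (a : α) (ys : List α),
      ¬ p a ∧ ys ≠ [] ∧ (∀ y ∈ ys, p y) ∧
      ((∃ b post, l = pre ++ a :: (ys ++ b :: post) ∧ ¬ p b) ∨ l = pre ++ a :: ys) := by
  intro l
  induction l with
  | nil => rintro _ ⟨x, hx, _⟩; simp at hx
  | cons a t ih =>
    intro hhead hex
    have hpa : ¬ p a := hhead a rfl
    obtain ⟨x, hx, hpx⟩ := hex
    have hxt : x ∈ t := by
      rcases mem_cons.mp hx with rfl | h
      · exact absurd hpx hpa
      · exact h
    obtain ⟨ys, rest, h1, h2, h3, _⟩ := span_spec p t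
    rcases eq_or_ne ys [] with rfl | hys
    · simp only [List.nil_append] at h1
      subst h1
      obtain ⟨pre, a', ys', hpa', hys', hysp', hcase⟩ := ih h3 ⟨x, hxt, hpx⟩
      refine ⟨a :: pre, a', ys', hpa', hys', hysp', ?_⟩
      rcases hcase with ⟨b, post, heq, hpb⟩ | heq
      · exact Or.inl ⟨b, post, by simp [heq], hpb⟩
      · exact Or.inr (by simp [heq])
    · rcases rest with _ | ⟨b, post⟩
      · exact ⟨[], a, ys, hpa, hys, h2, Or.inr (by simp [h1])⟩
      · exact ⟨[], a, ys, hpa, hys, h2, Or.inl ⟨b, post, by simp [h1], h3 b rfl⟩⟩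

private lemma mem_of_getLast?' {α : Type} {l : List α} {b : α}
    (h : l.getLast? = some b) : b ∈ l := by
  rcases eq_or_ne l [] with rfl | hl
  · simp at h
  · rw [List.getLast?_eq_getLast hl] at h
    obtain rfl : l.getLast hl = b := by injection h
    exact List.getLast_mem hl

private lemma getLast?_decomp {α : Type} {l pre ys : List α} {a : α}
    (h : l = pre ++ a :: ys) : l.getLast? = (a :: ys).getLast? := by
  subst h
  rw [List.getLast?_append, List.getLast?_eq_getLast (cons_ne_nil a ys)]
  rfl

private lemma getLast?_cons_of_ne_nil' {α : Type} {ys : List α} (a : α) (h : ys ≠ []) :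
    (a :: ys).getLast? = ys.getLast? := by
  rcases ys with _ | ⟨y, t⟩
  · simp at h
  · exact List.getLast?_cons_cons

private lemma run_reaches_end {c : V → β} (hE : CondE G c)
    {L : List (Set V)} (hP : AnisoPath G c L) {k : ℕ}
    (hmax : ∀ Z ∈ L, Z.ncard ≤ k)
    (hhead : ∀ h ∈ L.head?, h.ncard ≠ k)
    (hatt : ∃ Z ∈ L, Z.ncard = k) :
    ∃ pre a ys, L = pre ++ a :: ys ∧ a.ncard < k ∧ ys ≠ [] ∧ ∀ y ∈ ys, y.ncard = k := by
  classical
  obtain ⟨pre, a, ys, hpa, hys, hysp, hcase⟩ :=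
    exists_run (fun Z : Set V => Z.ncard = k) L hhead hatt
  have hlt : ∀ z ∈ L, ¬ (z.ncard = k) → z.ncard < k :=
    fun z hz h => lt_of_le_of_ne (hmax z hz) h
  rcases hcase with ⟨b, post, heq, hpb⟩ | heq
  · exfalso
    refine hE.1 ⟨a, b, ys, k, hys, ?_, hysp, ?_, ?_⟩
    · refine anisoPath_infix hP ⟨pre, post, ?_⟩
      rw [heq]; simp
    · exact hlt a (by rw [heq]; simp) hpa
    · exact hlt b (by rw [heq]; simp) hpb
  · exact ⟨pre, a, ys, heq, hlt a (by rw [heq]; simp) hpa, hys, hysp⟩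

private lemma chainS_map {c : V → β} {A B : Cell G c} (p : (anisoGraph G c).Walk A B) :
    List.Chain' (AnisoEdge G c) (p.support.map Subtype.val) :=
  (List.isChain_map Subtype.val).mpr p.isChain_adj_support

private lemma walk_anisoPath {c : V → β} {A B : Cell G c}
    (p : (anisoGraph G c).Walk A B) (hp : p.IsPath) :
    AnisoPath G c (p.support.map Subtype.val) := by
  refine ⟨?_, hp.support_nodup.map Subtype.val_injective, chainS_map p⟩
  intro X hX
  obtain ⟨Z, _, rfl⟩ := List.mem_map.mp hX
  exact Z.2

private lemma head?_map_support {c : V → β} {A B : Cell G c}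
    (p : (anisoGraph G c).Walk A B) :
    (p.support.map Subtype.val).head? = some A.val := by
  rw [p.support_eq_cons]; rfl

private lemma getLast?_map_support {c : V → β} {A B : Cell G c}
    (p : (anisoGraph G c).Walk A B) :
    (p.support.map Subtype.val).getLast? = some B.val := by
  erw [List.getLast?_map, List.getLast?_eq_getLast p.support_ne_nil]
  simp [p.getLast_support]
  rfl

private lemma claimS {c : V → β} (hE : CondE G c) (hF : CondF G c)
    {L : List (Set V)} (hP : AnisoPath G c L) {A B : Set V}
    (hhead : L.head? = some A) (hlast : L.getLast? = some B) (hB : Hetero G B) :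
    B.ncard ≤ A.ncard := by
  by_contra hlt
  push_neg at hlt
  have hLne : L ≠ [] := by rintro rfl; simp at hhead
  obtain ⟨M, hM, hmax⟩ := exists_max_cell L hLne
  have hBL : B ∈ L := mem_of_getLast?' hlast
  have hAk : A.ncard < M.ncard := lt_of_lt_of_le hlt (hmax B hBL)
  obtain ⟨pre, a, ys, hdec, hak, hys, hysp⟩ := run_reaches_end hE hP hmax
    (by intro h hh; rw [hhead, Option.mem_some_iff] at hh; subst hh; omega) ⟨M, hM, rfl⟩
  refine hF ⟨a, ys, B, M.ncard, hys, ?_, hysp, hak, ?_, hB⟩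
  · exact anisoPath_infix hP ⟨pre, [], by simp [hdec]⟩
  · rw [← getLast?_cons_of_ne_nil' a hys, ← getLast?_decomp hdec]; exact hlast

private lemma hetero_min' {c : V → β} (hE : CondE G c) (hF : CondF G c)
    (X Z : Cell G c) (hX : Hetero G X.val)
    (hr : (anisoGraph G c).Reachable X Z) : X.val.ncard ≤ Z.val.ncard := by
  classical
  obtain ⟨p⟩ := hr.symm
  exact claimS hE hF (walk_anisoPath p.bypass p.bypass_isPath)
    (head?_map_support _) (getLast?_map_support _) hX

private lemma mem_of_head?' {α : Type} {l : List α} {a : α} (h : l.head? = some a) :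
    a ∈ l := by
  rcases l with _ | ⟨x, t⟩
  · simp at h
  · simp only [head?_cons, Option.some.injEq] at h
    subst h; exact mem_cons_self

private lemma hetero_unique' {c : V → β} (hC : CondC G c) (hE : CondE G c) (hF : CondF G c)
    (X Y : Cell G c) (hX : Hetero G X.val) (hY : Hetero G Y.val)
    (hr : (anisoGraph G c).Reachable X Y) : X = Y := by
  classical
  by_contra hne
  obtain ⟨p⟩ := hr
  set q := p.bypass with hq
  have hqp : q.IsPath := p.bypass_isPath
  set L := q.support.map Subtype.val with hL
  have hP : AnisoPath G c L := walk_anisoPath q hqp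
  have hhead : L.head? = some X.val := head?_map_support q
  have hlast : L.getLast? = some Y.val := getLast?_map_support q
  have hallge : ∀ z ∈ L, Y.val.ncard ≤ z.ncard := by
    intro z hz
    obtain ⟨pre, suff, hdec⟩ := List.append_of_mem hz
    have hsuffP : AnisoPath G c (z :: suff) :=
      anisoPath_infix hP ⟨pre, [], by simp [hdec]⟩
    exact claimS hE hF hsuffP rfl (by rw [← getLast?_decomp hdec]; exact hlast) hY
  have h1 : Y.val.ncard ≤ X.val.ncard := claimS hE hF hP hhead hlast hY
  have h2 : X.val.ncard ≤ Y.val.ncard := claimS hE hF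
    (walk_anisoPath q.reverse hqp.reverse) (head?_map_support _) (getLast?_map_support _) hX
  have hXY2 : X.val.ncard = Y.val.ncard := _root_.le_antisymm h2 h1
  have hLne : L ≠ [] := by rintro h; rw [h] at hhead; simp at hhead
  obtain ⟨M, hM, hmax⟩ := exists_max_cell L hLne
  have hYk : Y.val.ncard ≤ M.ncard := hallge M hM
  -- tail structure
  have htne : q.support.tail ≠ [] := by
    intro h
    have hy := q.end_mem_support
    rw [q.support_eq_cons, h] at hy
    simp at hy
    exact hne hy.symm
  rcases eq_or_lt_of_le hYk with hk | hk
  · -- all sizes equal: CondC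
    have hall : ∀ Z ∈ L, Z.ncard = Y.val.ncard :=
      fun Z hZ => le_antisymm (hk ▸ hmax Z hZ) (hallge Z hZ)
    set tm := q.support.tail.map Subtype.val with htm
    have htmne : tm ≠ [] := by
      intro h; exact htne (List.map_eq_nil_iff.mp h)
    have hLtm : L = X.val :: tm := by
      rw [hL, q.support_eq_cons]; rfl
    have html : tm.getLast? = some Y.val := by
      rw [← getLast?_cons_of_ne_nil' X.val htmne, ← hLtm]; exact hlast
    have htmdec : tm = tm.dropLast ++ [Y.val] := by
      conv_lhs => rw [← List.dropLast_append_getLast htmne]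
      rw [List.getLast?_eq_getLast htmne] at html
      injection html with html'
      rw [html']
    refine hC ⟨X.val, Y.val, tm.dropLast, Y.val.ncard, ?_, ?_, hX, hY⟩
    · rw [← htmdec, ← hLtm]; exact hP
    · intro Z hZ
      apply hall
      rw [hLtm, htmdec]; exact hZ
  · -- max exceeds endpoints
    obtain ⟨pre, a, ys, hdec, _, hys, hysp⟩ := run_reaches_end hE hP hmax
      (by intro h hh; rw [hhead, Option.mem_some_iff] at hh; subst hh; omega) ⟨M, hM, rfl⟩
    have hysl : ys.getLast? = some Y.val := by
      rw [← getLast?_cons_of_ne_nil' a hys, ← getLast?_decomp hdec]; exact hlast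
    have := hysp Y.val (mem_of_getLast?' hysl)
    omega

private lemma g2' {c : V → β} (hE : CondE G c) (R X Y : Cell G c)
    (hmin : ∀ Z : Cell G c, (anisoGraph G c).Reachable R Z → R.val.ncard ≤ Z.val.ncard)
    (hRX : (anisoGraph G c).Reachable R X)
    (hXY : (anisoGraph G c).Adj X Y)
    (hdist : (anisoGraph G c).dist R Y = (anisoGraph G c).dist R X + 1) :
    X.val.ncard ≤ Y.val.ncard := by
  classical
  by_contra hlt
  push_neg at hlt
  have hRY : (anisoGraph G c).Reachable R Y := hRX.trans hXY.reachable
  have hRYle : R.val.ncard ≤ Y.val.ncard := hmin Y hRY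
  rcases eq_or_ne R X with rfl | hne
  · omega
  obtain ⟨p, hp, hplen⟩ := hRX.exists_path_of_dist
  have hYs : Y ∉ p.support := by
    intro hYp
    have h1 : (anisoGraph G c).dist R Y ≤ (p.takeUntil Y hYp).length :=
      SimpleGraph.dist_le _
    have h2 := SimpleGraph.Walk.length_takeUntil_le p hYp
    omega
  set q := SimpleGraph.Walk.cons hXY.symm p.reverse with hq
  have hqp : q.IsPath := by
    rw [hq, SimpleGraph.Walk.cons_isPath_iff]
    exact ⟨hp.reverse, by rwa [SimpleGraph.Walk.support_reverse, List.mem_reverse]⟩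
  set L := q.support.map Subtype.val with hL
  have hP : AnisoPath G c L := walk_anisoPath q hqp
  have hhead : L.head? = some Y.val := head?_map_support q
  have hlast : L.getLast? = some R.val := getLast?_map_support q
  have hXL : X.val ∈ L := by
    apply List.mem_map_of_mem
    rw [hq]
    simp only [SimpleGraph.Walk.support_cons, SimpleGraph.Walk.support_reverse]
    exact mem_cons_of_mem _ (List.mem_reverse.mpr p.end_mem_support)
  have hLne : L ≠ [] := by rintro h; rw [h] at hhead; simp at hhead
  obtain ⟨M, hM, hmax⟩ := exists_max_cell L hLne
  have hXk : X.val.ncard ≤ M.ncard := hmax _ hXL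
  obtain ⟨pre, a, ys, hdec, _, hys, hysp⟩ := run_reaches_end hE hP hmax
    (by intro h hh; rw [hhead, Option.mem_some_iff] at hh; subst hh; omega) ⟨M, hM, rfl⟩
  have hysl : ys.getLast? = some R.val := by
    rw [← getLast?_cons_of_ne_nil' a hys, ← getLast?_decomp hdec]; exact hlast
  have := hysp R.val (mem_of_getLast?' hysl)
  omega

private lemma cycle_facts {c : V → β} {u : Cell G c} {q : (anisoGraph G c).Walk u u}
    (hq : q.IsCycle) :
    ∃ D : List (Cell G c), q.support = u :: (D ++ [u]) ∧ (u :: D).Nodup ∧ 2 ≤ D.length := by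
  have hne := q.support_ne_nil
  have h1 : q.support.dropLast ++ [u] = q.support := by
    conv_rhs => rw [← List.dropLast_append_getLast hne]
    rw [q.getLast_support]
  have hlen : q.support.length = q.length + 1 := q.length_support
  have h3 := hq.three_le_length
  have hcons : q.support = u :: q.support.tail := q.support_eq_cons
  rcases hD : q.support.dropLast with _ | ⟨d, D⟩
  · exfalso
    rw [hD] at h1
    have h4 : q.support.length = 1 := by rw [← h1]; rfl
    omega
  · rw [hD] at h1
    have hdu : d = u := by
      rw [hcons] at h1
      exact ((List.cons.injEq _ _ _ _).mp h1).1
    rw [hdu] at h1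
    have htail : q.support.tail = D ++ [u] := by
      rw [hcons] at h1
      exact ((List.cons.injEq _ _ _ _).mp h1).2.symm
    have hnd : (D ++ [u]).Nodup := htail ▸ hq.support_nodup
    rw [List.nodup_append] at hnd
    have hD_nodup : (u :: D).Nodup := by
      rw [List.nodup_cons]
      refine ⟨fun hu2 => hnd.2.2 u hu2 u (mem_singleton_self u) rfl, hnd.1⟩
    have hDlen : 2 ≤ D.length := by
      have h5 : q.support.length = D.length + 2 := by
        rw [← h1]; simp
      omega
    exact ⟨D, by rw [hcons, htail], hD_nodup, hDlen⟩

private lemma cycle_small {c : V → β} (hE : CondE G c) {u : Cell G c}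
    {q : (anisoGraph G c).Walk u u} (hq : q.IsCycle) {k : ℕ}
    (hmax : ∀ Z ∈ q.support.map Subtype.val, Z.ncard ≤ k)
    (hu : u.val.ncard < k)
    (hatt : ∃ Z ∈ q.support.map Subtype.val, Z.ncard = k) : False := by
  classical
  obtain ⟨D, hsup, hnd, hlen⟩ := cycle_facts hq
  set L := (u :: D).map Subtype.val with hLdef
  have hSL : q.support.map Subtype.val = L ++ [u.val] := by
    rw [hsup, hLdef]; exact congrArg (List.cons u.val) (List.map_append ..)
  have chainS : List.Chain' (AnisoEdge G c) (q.support.map Subtype.val) := chainS_map q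
  have hP : AnisoPath G c L := by
    refine ⟨?_, hnd.map Subtype.val_injective, chainS.infix ⟨[], [u.val], by simp [hSL]⟩⟩
    intro X hX
    obtain ⟨Z, _, rfl⟩ := List.mem_map.mp hX
    exact Z.2
  have hmaxL : ∀ Z ∈ L, Z.ncard ≤ k := fun Z hZ =>
    hmax Z (by rw [hSL]; exact mem_append_left _ hZ)
  have hattL : ∃ Z ∈ L, Z.ncard = k := by
    obtain ⟨Z, hZ, hZk⟩ := hatt
    rw [hSL] at hZ
    rcases mem_append.mp hZ with h | h
    · exact ⟨Z, h, hZk⟩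
    · simp at h; subst h; omega
  have hheadL : L.head? = some u.val := rfl
  obtain ⟨pre, a, ys, hdec, hak, hys, hysp⟩ := run_reaches_end hE hP hmaxL
    (by intro h hh; rw [hheadL, Option.mem_some_iff] at hh; subst hh; omega) hattL
  have hLlen : 3 ≤ L.length := by
    have h9 : L.length = D.length + 1 := List.length_map ..
    omega
  rcases hpre : pre with _ | ⟨p₀, pre'⟩
  · -- E2 case
    rw [hpre] at hdec
    simp only [List.nil_append] at hdec
    have hau : a = u.val := by
      have h6 := hheadL
      rw [hdec] at h6
      simpa using h6
    refine hE.2 ⟨a, ys, k, ?_, ?_, ?_, hysp, by omega⟩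
    · have h7 := congrArg List.length hdec
      simp at h7
      omega
    · rw [← hdec]; exact hP
    · have h8 : (a :: ys) ++ [a] = q.support.map Subtype.val := by
        rw [hSL, ← hdec, hau]
      rw [h8]
      exact chainS
  · -- E1 case with wrap-around
    rw [hpre] at hdec
    have hp0 : p₀ = u.val := by
      have h6 := hheadL
      rw [hdec] at h6
      simpa using h6
    have hLnodup : L.Nodup := hnd.map Subtype.val_injective
    have hLnodup2 : ((p₀ :: pre') ++ a :: ys).Nodup := hdec ▸ hLnodup
    rw [List.nodup_append] at hLnodup2
    have hunotin : p₀ ∉ a :: ys := fun hmem => hLnodup2.2.2 p₀ mem_cons_self p₀ hmem rfl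
    refine hE.1 ⟨a, p₀, ys, k, hys, ?_, hysp, hak, by rw [hp0]; exact hu⟩
    constructor
    · -- cells
      intro Z hZ
      rcases mem_cons.mp hZ with rfl | hZ
      · exact hP.1 Z (by rw [hdec]; simp)
      · rcases mem_append.mp hZ with h | h
        · exact hP.1 Z (by rw [hdec]; simp [h])
        · simp at h; subst h; rw [hp0]; exact u.2
    constructor
    · -- nodup : a :: (ys ++ [p₀]) = (a :: ys) ++ [p₀]
      rw [show a :: (ys ++ [p₀]) = (a :: ys) ++ [p₀] from rfl, List.nodup_append]
      refine ⟨?_, List.nodup_singleton _, ?_⟩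
      · exact hLnodup2.2.1
      · intro x hx b hx2 hxb
        simp at hx2
        subst hx2
        subst hxb
        exact hunotin hx
    · -- chain'
      have : (a :: (ys ++ [p₀])) = (a :: ys) ++ [p₀] := rfl
      rw [this]
      refine chainS.infix ⟨p₀ :: pre', [], ?_⟩
      rw [hSL, hdec, hp0]
      simp

private lemma no_cycle' {c : V → β} (hD : CondD G c) (hE : CondE G c) :
    (anisoGraph G c).IsAcyclic := by
  classical
  intro A p hp
  set S := p.support.map Subtype.val with hS
  have hSne : S ≠ [] := by
    rw [hS]
    intro h
    exact p.support_ne_nil (List.map_eq_nil_iff.mp h)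
  obtain ⟨M, hM, hmax⟩ := exists_max_cell S hSne
  by_cases hall : ∀ z ∈ S, z.ncard = M.ncard
  · -- CondD violation
    obtain ⟨D, hsup, hnd, hlen⟩ := cycle_facts hp
    refine hD ⟨A.val, D.map Subtype.val, M.ncard, ?_, ?_, ?_, ?_⟩
    · have h9 : (D.map Subtype.val).length = D.length := List.length_map ..
      simp; omega
    · refine ⟨?_, hnd.map Subtype.val_injective, ?_⟩
      · intro X hX
        rcases mem_cons.mp hX with rfl | hX
        · exact A.2
        · obtain ⟨Z, _, rfl⟩ := List.mem_map.mp hX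
          exact Z.2
      · have chainS : List.Chain' (AnisoEdge G c) S := chainS_map p
        refine chainS.infix ⟨[], [A.val], ?_⟩
        rw [hS, hsup]
        exact congrArg (List.cons A.val) (List.map_append (f := Subtype.val) (l₁ := D) (l₂ := [A])).symm
    · have chainS : List.Chain' (AnisoEdge G c) S := chainS_map p
      have : (A.val :: map Subtype.val D) ++ [A.val] = S := by
        rw [hS, hsup]; exact congrArg (List.cons A.val) (List.map_append (f := Subtype.val) (l₁ := D) (l₂ := [A])).symm
      rw [this]
      exact chainS
    · intro Z hZ
      apply hall
      rw [hS, hsup]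
      rcases mem_cons.mp hZ with rfl | hZ
      · exact List.mem_cons_self
      · obtain ⟨z, hz, rfl⟩ := List.mem_map.mp hZ
        exact mem_cons_of_mem _ (List.mem_map_of_mem (mem_append_left _ hz))
  · push_neg at hall
    obtain ⟨z, hz, hzk⟩ := hall
    obtain ⟨w, hw, rfl⟩ := (List.mem_map (l := p.support)).mp hz
    have hzlt : w.val.ncard < M.ncard := lt_of_le_of_ne (hmax _ hz) hzk
    set q := p.rotate w hw with hq
    have hqc : q.IsCycle := hp.rotate hw
    have hrot := p.support_rotate w hw
    -- membership transfer
    have hAt : A ∈ p.support.tail := by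
      obtain ⟨D, hsup, _, _⟩ := cycle_facts hp
      rw [hsup]
      simp
    have hut : w ∈ q.support.tail := by
      obtain ⟨D, hsup, _, _⟩ := cycle_facts hqc
      rw [hsup]
      simp
    have hsubp : ∀ y : Cell G c, y ∈ q.support → y ∈ p.support := by
      intro y hy
      rw [q.support_eq_cons] at hy
      rcases mem_cons.mp hy with rfl | hy
      · exact hw
      · rw [p.support_eq_cons]
        exact mem_cons_of_mem _ (hrot.mem_iff.mp hy)
    have hsubq : ∀ y : Cell G c, y ∈ p.support → y ∈ q.support := by
      intro y hy
      rw [p.support_eq_cons] at hy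
      rw [q.support_eq_cons]
      rcases mem_cons.mp hy with rfl | hy
      · exact mem_cons_of_mem _ (hrot.mem_iff.mpr hAt)
      · exact mem_cons_of_mem _ (hrot.mem_iff.mpr hy)
    refine cycle_small hE hqc (k := M.ncard) ?_ hzlt ?_
    · intro Z hZ
      obtain ⟨y, hy, rfl⟩ := (List.mem_map (l := q.support)).mp hZ
      exact hmax _ (List.mem_map_of_mem (hsubp y hy))
    · obtain ⟨m, hm, hmeq⟩ := (List.mem_map (l := p.support)).mp hM
      exact ⟨M, by rw [← hmeq]; exact List.mem_map_of_mem (hsubq m hm), rfl⟩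

end Proof3

theorem condAF_implies_condGH {V : Type} [Fintype V] (G : SimpleGraph V) (c : V → ℕ)
    (hA : CondA G c) (hB : CondB G c) (hC : CondC G c) (hD : CondD G c)
    (hE : CondE G c) (hF : CondF G c) : CondG G c ∧ CondH G c := by
  refine ⟨⟨no_cycle' hD hE, fun R X Y hmin hRX hXY hdist => g2' hE R X Y hmin hRX hXY hdist⟩,
    fun X Y hX hY hr => hetero_unique' hC hE hF X Y hX hY hr,
    fun X Z hX hr => hetero_min' hE hF X Z hX hr⟩

end ColorRef
end

section
/- Let X be a cell of the stable partition of a finite (possibly vertex-colored) simple graph G, and suppose the induced subgraph G[X] is d-regular. If H is obtained from G by replacing the edges of G[X] with the edges of an arbitrary d-regular graph on the vertex set X (leaving all other edges of G unchanged), then C^i_G(u) = C^i_H(u) for every vertex u ∈ V(G) and every i ≥ 0, where C^i_G and C^i_H denote the color-refinement colorings computed in G and in H respectively. -/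
namespace ColorRef

variable {V W : Type}

/-! ### Auxiliary lemmas for local surgery -/

lemma crRel_succ_iff (G : SimpleGraph V) {α : Type} (c : V → α) (i : ℕ) (u v : V) :
    crRel G c (i + 1) u v ↔ crRel G c i u v ∧
      ∀ w : V, {a : V | G.Adj u a ∧ crRel G c i a w}.ncard =
               {a : V | G.Adj v a ∧ crRel G c i a w}.ncard :=
  Iff.rfl

lemma crRel_zero_iff (G : SimpleGraph V) {α : Type} (c : V → α) (u v : V) :
    crRel G c 0 u v ↔ c u = c v := Iff.rfl

lemma crRel_refl (G : SimpleGraph V) {α : Type} (c : V → α) :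
    ∀ (i : ℕ) (u : V), crRel G c i u u
  | 0, _ => rfl
  | (i + 1), u => ⟨crRel_refl G c i u, fun _ => rfl⟩

lemma crRel_symm (G : SimpleGraph V) {α : Type} (c : V → α) :
    ∀ (i : ℕ) {u v : V}, crRel G c i u v → crRel G c i v u
  | 0, _, _, h => h.symm
  | (i + 1), _, _, h => ⟨crRel_symm G c i h.1, fun w => (h.2 w).symm⟩

lemma crRel_trans (G : SimpleGraph V) {α : Type} (c : V → α) :
    ∀ (i : ℕ) {u v w : V}, crRel G c i u v → crRel G c i v w → crRel G c i u w
  | 0, _, _, _, h, h' => h.trans h'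
  | (i + 1), _, _, _, h, h' =>
      ⟨crRel_trans G c i h.1 h'.1, fun x => (h.2 x).trans (h'.2 x)⟩

/-- Key counting lemma: degrees into any round-`i` color class of `G`
agree between `G` and `H`. -/
lemma key_count {V : Type} [Fintype V] (G H : SimpleGraph V) (c : V → ℕ)
    (X : Set V) (d : ℕ) (hX : IsCell G c X)
    (hGreg : ∀ u ∈ X, {v : V | v ∈ X ∧ G.Adj u v}.ncard = d)
    (hHreg : ∀ u ∈ X, {v : V | v ∈ X ∧ H.Adj u v}.ncard = d)
    (hsame : ∀ u v : V, ¬ (u ∈ X ∧ v ∈ X) → (H.Adj u v ↔ G.Adj u v))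
    (i : ℕ) (u w : V) :
    {b : V | G.Adj u b ∧ crRel G c i b w}.ncard =
    {b : V | H.Adj u b ∧ crRel G c i b w}.ncard := by
  by_cases hu : u ∈ X
  · obtain ⟨u0, hu0⟩ := hX
    have hconst : ∀ b ∈ X, ∀ b' ∈ X, crRel G c i b w → crRel G c i b' w := by
      intro b hb b' hb' h
      have h1 : crRel G c i u0 b := by rw [hu0] at hb; exact hb i
      have h2 : crRel G c i u0 b' := by rw [hu0] at hb'; exact hb' i
      exact crRel_trans G c i (crRel_trans G c i (crRel_symm G c i h2) h1) h
    by_cases hex : ∃ b ∈ X, crRel G c i b w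
    · obtain ⟨b0, hb0, hcr0⟩ := hex
      have hall : ∀ b ∈ X, crRel G c i b w := fun b hb => hconst b0 hb0 b hb hcr0
      have split : ∀ K : SimpleGraph V,
          {b : V | K.Adj u b ∧ crRel G c i b w}.ncard =
          {v : V | v ∈ X ∧ K.Adj u v}.ncard +
            {b : V | b ∉ X ∧ K.Adj u b ∧ crRel G c i b w}.ncard := by
        intro K
        have heq : {b : V | K.Adj u b ∧ crRel G c i b w} =
            {v : V | v ∈ X ∧ K.Adj u v} ∪
              {b : V | b ∉ X ∧ K.Adj u b ∧ crRel G c i b w} := by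
          ext b
          by_cases hb : b ∈ X
          · simp only [Set.mem_setOf_eq, Set.mem_union, hb, hall b hb]
            tauto
          · simp only [Set.mem_setOf_eq, Set.mem_union, hb]
            tauto
        rw [heq, Set.ncard_union_eq (Set.disjoint_left.mpr fun b hb hb' => hb'.1 hb.1)
          (Set.toFinite _) (Set.toFinite _)]
      rw [split G, split H, hGreg u hu, hHreg u hu]
      have hsets : {b : V | b ∉ X ∧ G.Adj u b ∧ crRel G c i b w} =
          {b : V | b ∉ X ∧ H.Adj u b ∧ crRel G c i b w} := by
        ext b
        simp only [Set.mem_setOf_eq]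
        constructor
        · rintro ⟨hb, ha, hc⟩
          exact ⟨hb, (hsame u b fun h => hb h.2).mpr ha, hc⟩
        · rintro ⟨hb, ha, hc⟩
          exact ⟨hb, (hsame u b fun h => hb h.2).mp ha, hc⟩
      rw [hsets]
    · push_neg at hex
      congr 1
      ext b
      simp only [Set.mem_setOf_eq]
      by_cases hb : b ∈ X
      · constructor
        · rintro ⟨_, hc⟩; exact absurd hc (hex b hb)
        · rintro ⟨_, hc⟩; exact absurd hc (hex b hb)
      · rw [hsame u b fun h => hb h.2]
  · congr 1
    ext b
    simp only [Set.mem_setOf_eq, hsame u b fun h => hu h.1]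

lemma count_inl {V : Type} [Fintype V] (G H : SimpleGraph V) (c : V → ℕ)
    (i : ℕ) (u : V) (w : V ⊕ V) :
    {x : V ⊕ V | (G ⊕g H).Adj (Sum.inl u) x ∧
        crRel (G ⊕g H) (Sum.elim c c) i x w}.ncard =
    {b : V | G.Adj u b ∧ crRel (G ⊕g H) (Sum.elim c c) i (Sum.inl b) w}.ncard := by
  have heq : {x : V ⊕ V | (G ⊕g H).Adj (Sum.inl u) x ∧
        crRel (G ⊕g H) (Sum.elim c c) i x w} =
      Sum.inl '' {b : V | G.Adj u b ∧ crRel (G ⊕g H) (Sum.elim c c) i (Sum.inl b) w} := by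
    ext x
    cases x with
    | inl b => simp [SimpleGraph.sum_adj]
    | inr b => simp [SimpleGraph.sum_adj]
  rw [heq, Set.ncard_image_of_injective _ Sum.inl_injective]

lemma count_inr {V : Type} [Fintype V] (G H : SimpleGraph V) (c : V → ℕ)
    (i : ℕ) (u : V) (w : V ⊕ V) :
    {x : V ⊕ V | (G ⊕g H).Adj (Sum.inr u) x ∧
        crRel (G ⊕g H) (Sum.elim c c) i x w}.ncard =
    {b : V | H.Adj u b ∧ crRel (G ⊕g H) (Sum.elim c c) i (Sum.inr b) w}.ncard := by
  have heq : {x : V ⊕ V | (G ⊕g H).Adj (Sum.inr u) x ∧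
        crRel (G ⊕g H) (Sum.elim c c) i x w} =
      Sum.inr '' {b : V | H.Adj u b ∧ crRel (G ⊕g H) (Sum.elim c c) i (Sum.inr b) w} := by
    ext x
    cases x with
    | inl b => simp [SimpleGraph.sum_adj]
    | inr b => simp [SimpleGraph.sum_adj]
  rw [heq, Set.ncard_image_of_injective _ Sum.inr_injective]

/-- The main invariant: round-`i` colors in `G ⊕g H` correspond to round-`i` colors in `G`. -/
lemma trio {V : Type} [Fintype V] (G H : SimpleGraph V) (c : V → ℕ)
    (key : ∀ (i : ℕ) (u w : V),
      {b : V | G.Adj u b ∧ crRel G c i b w}.ncard =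
      {b : V | H.Adj u b ∧ crRel G c i b w}.ncard) :
    ∀ (i : ℕ) (u v : V),
      (crRel (G ⊕g H) (Sum.elim c c) i (Sum.inl u) (Sum.inl v) ↔ crRel G c i u v) ∧
      (crRel (G ⊕g H) (Sum.elim c c) i (Sum.inr u) (Sum.inr v) ↔ crRel G c i u v) ∧
      (crRel (G ⊕g H) (Sum.elim c c) i (Sum.inl u) (Sum.inr v) ↔ crRel G c i u v) ∧
      (crRel (G ⊕g H) (Sum.elim c c) i (Sum.inr u) (Sum.inl v) ↔ crRel G c i u v) := by
  intro i
  induction i with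
  | zero => exact fun u v => ⟨Iff.rfl, Iff.rfl, Iff.rfl, Iff.rfl⟩
  | succ i ih =>
    have cntL : ∀ (u : V) (w : V ⊕ V),
        {x : V ⊕ V | (G ⊕g H).Adj (Sum.inl u) x ∧
            crRel (G ⊕g H) (Sum.elim c c) i x w}.ncard =
        {b : V | G.Adj u b ∧ crRel G c i b (Sum.elim id id w)}.ncard := by
      intro u w
      rw [count_inl]
      congr 1
      ext b
      cases w with
      | inl w0 =>
        simp only [Set.mem_setOf_eq, Sum.elim_inl, id_eq]
        rw [(ih b w0).1]
      | inr w0 =>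
        simp only [Set.mem_setOf_eq, Sum.elim_inr, id_eq]
        rw [(ih b w0).2.2.1]
    have cntR : ∀ (u : V) (w : V ⊕ V),
        {x : V ⊕ V | (G ⊕g H).Adj (Sum.inr u) x ∧
            crRel (G ⊕g H) (Sum.elim c c) i x w}.ncard =
        {b : V | G.Adj u b ∧ crRel G c i b (Sum.elim id id w)}.ncard := by
      intro u w
      rw [count_inr]
      have heq : {b : V | H.Adj u b ∧ crRel (G ⊕g H) (Sum.elim c c) i (Sum.inr b) w} =
          {b : V | H.Adj u b ∧ crRel G c i b (Sum.elim id id w)} := by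
        ext b
        cases w with
        | inl w0 =>
          simp only [Set.mem_setOf_eq, Sum.elim_inl, id_eq]
          rw [(ih b w0).2.2.2]
        | inr w0 =>
          simp only [Set.mem_setOf_eq, Sum.elim_inr, id_eq]
          rw [(ih b w0).2.1]
      rw [heq, ← key i u (Sum.elim id id w)]
    intro u v
    refine ⟨?_, ?_, ?_, ?_⟩
    · rw [crRel_succ_iff, crRel_succ_iff]
      constructor
      · rintro ⟨h1, h2⟩
        refine ⟨(ih u v).1.mp h1, fun w0 => ?_⟩
        have h := h2 (Sum.inl w0)
        rwa [cntL u, cntL v] at h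
      · rintro ⟨h1, h2⟩
        refine ⟨(ih u v).1.mpr h1, fun w => ?_⟩
        rw [cntL u, cntL v]
        exact h2 _
    · rw [crRel_succ_iff, crRel_succ_iff]
      constructor
      · rintro ⟨h1, h2⟩
        refine ⟨(ih u v).2.1.mp h1, fun w0 => ?_⟩
        have h := h2 (Sum.inl w0)
        rwa [cntR u, cntR v] at h
      · rintro ⟨h1, h2⟩
        refine ⟨(ih u v).2.1.mpr h1, fun w => ?_⟩
        rw [cntR u, cntR v]
        exact h2 _
    · rw [crRel_succ_iff, crRel_succ_iff]
      constructor
      · rintro ⟨h1, h2⟩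
        refine ⟨(ih u v).2.2.1.mp h1, fun w0 => ?_⟩
        have h := h2 (Sum.inl w0)
        rwa [cntL u, cntR v] at h
      · rintro ⟨h1, h2⟩
        refine ⟨(ih u v).2.2.1.mpr h1, fun w => ?_⟩
        rw [cntL u, cntR v]
        exact h2 _
    · rw [crRel_succ_iff, crRel_succ_iff]
      constructor
      · rintro ⟨h1, h2⟩
        refine ⟨(ih u v).2.2.2.mp h1, fun w0 => ?_⟩
        have h := h2 (Sum.inl w0)
        rwa [cntR u, cntL v] at h
      · rintro ⟨h1, h2⟩
        refine ⟨(ih u v).2.2.2.mpr h1, fun w => ?_⟩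
        rw [cntR u, cntL v]
        exact h2 _

theorem local_surgery_cell {V : Type} [Fintype V] (G H : SimpleGraph V) (c : V → ℕ)
    (X : Set V) (d : ℕ) (hX : IsCell G c X)
    (hGreg : ∀ u ∈ X, {v : V | v ∈ X ∧ G.Adj u v}.ncard = d)
    (hHreg : ∀ u ∈ X, {v : V | v ∈ X ∧ H.Adj u v}.ncard = d)
    (hsame : ∀ u v : V, ¬ (u ∈ X ∧ v ∈ X) → (H.Adj u v ↔ G.Adj u v)) :
    ∀ (i : ℕ) (u : V), crRel (G ⊕g H) (Sum.elim c c) i (Sum.inl u) (Sum.inr u) := by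
  intro i u
  exact (trio G H c (key_count G H c X d hX hGreg hHreg hsame) i u u).2.2.1.mpr
    (crRel_refl G c i u)

end ColorRef
end

section
/- Let m, n, c, d be natural numbers with c ≤ n, d ≤ m and mc = nd, so that there exists a bipartite graph with parts A of size m and B of size n in which every vertex of A has degree c and every vertex of B has degree d. Then any two such bipartite graphs (with the given part sizes and degrees, under isomorphisms respecting the bipartition) are isomorphic if and only if c ∈ {0, 1, n−1, n} or d ∈ {0, 1, m−1, m}. -/
namespace ColorRef

variable {V W : Type}

namespace BR
open Finset
variable {V W V' W' : Type}



/-- row degree condition -/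
def DegRow (R : V → W → Prop) (c : ℕ) : Prop := ∀ a, {b | R a b}.ncard = c
/-- column degree condition -/
def DegCol (R : V → W → Prop) (d : ℕ) : Prop := ∀ b, {a | R a b}.ncard = d

lemma ncard_comp_equiv (f : W ≃ W') (p : W' → Prop) :
    {b : W | p (f b)}.ncard = {b' : W' | p b'}.ncard := by
  have h : f.symm '' {b' : W' | p b'} = {b : W | p (f b)} := by
    ext b
    constructor
    · rintro ⟨b', hb', rfl⟩; simpa using hb'
    · intro hb; exact ⟨f b, hb, by simp⟩
  rw [← h, Set.ncard_image_of_injective _ f.symm.injective]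

lemma degRow_transfer (e : V ≃ V') (f : W ≃ W') {R : V → W → Prop} {R' : V' → W' → Prop}
    (h : ∀ a b, R' (e a) (f b) ↔ R a b) {c : ℕ} (hR' : DegRow R' c) : DegRow R c := by
  intro a
  have h2 : {b | R a b} = {b : W | R' (e a) (f b)} := by ext b; simp [h]
  rw [h2, ncard_comp_equiv f (fun b' => R' (e a) b')]
  exact hR' (e a)

lemma degCol_transfer (e : V ≃ V') (f : W ≃ W') {R : V → W → Prop} {R' : V' → W' → Prop}
    (h : ∀ a b, R' (e a) (f b) ↔ R a b) {d : ℕ} (hR' : DegCol R' d) : DegCol R d := by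
  intro b
  have h2 : {a | R a b} = {a : V | R' (e a) (f b)} := by ext a; simp [h]
  rw [h2, ncard_comp_equiv e (fun a' => R' a' (f b))]
  exact hR' (f b)

/-- `a` and `a'` are (row) twins. -/
def Twin (R : V → W → Prop) (a a' : V) : Prop := a ≠ a' ∧ ∀ b, R a b ↔ R a' b

def ExTwin (R : V → W → Prop) : Prop := ∃ a a', Twin R a a'

def AllTwin (R : V → W → Prop) : Prop := ∀ a, ∃ a', Twin R a a'

lemma twin_transfer (e : V ≃ V') (f : W ≃ W') {R : V → W → Prop} {R' : V' → W' → Prop}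
    (h : ∀ a b, R' (e a) (f b) ↔ R a b) (a a' : V) :
    Twin R a a' ↔ Twin R' (e a) (e a') := by
  constructor
  · rintro ⟨hne, ht⟩
    refine ⟨fun hh => hne (e.injective hh), fun b' => ?_⟩
    rw [← Equiv.apply_symm_apply f b', h, h]
    exact ht _
  · rintro ⟨hne, ht⟩
    refine ⟨fun hh => hne (by rw [hh]), fun b => ?_⟩
    rw [← h a b, ← h a' b]
    exact ht _

lemma exTwin_transfer (e : V ≃ V') (f : W ≃ W') {R : V → W → Prop} {R' : V' → W' → Prop}
    (h : ∀ a b, R' (e a) (f b) ↔ R a b) : ExTwin R ↔ ExTwin R' := by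
  constructor
  · rintro ⟨a, a', ht⟩
    exact ⟨e a, e a', (twin_transfer e f h a a').mp ht⟩
  · rintro ⟨a, a', ht⟩
    refine ⟨e.symm a, e.symm a', (twin_transfer e f h _ _).mpr ?_⟩
    simpa using ht

lemma allTwin_transfer (e : V ≃ V') (f : W ≃ W') {R : V → W → Prop} {R' : V' → W' → Prop}
    (h : ∀ a b, R' (e a) (f b) ↔ R a b) : AllTwin R ↔ AllTwin R' := by
  constructor
  · intro hA a'
    obtain ⟨x, hx⟩ := hA (e.symm a')
    refine ⟨e x, ?_⟩
    have := (twin_transfer e f h (e.symm a') x).mp hx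
    simpa using this
  · intro hA a
    obtain ⟨x, hx⟩ := hA (e a)
    exact ⟨e.symm x, by simpa using (twin_transfer e f h a (e.symm x)).mpr (by simpa using hx)⟩

/-- Uniqueness of the biregular bipartite graph with these parameters. -/
def Unq (m n c d : ℕ) : Prop :=
  ∀ R R' : Fin m → Fin n → Prop,
    (∀ a, {b : Fin n | R a b}.ncard = c) → (∀ b, {a : Fin m | R a b}.ncard = d) →
    (∀ a, {b : Fin n | R' a b}.ncard = c) → (∀ b, {a : Fin m | R' a b}.ncard = d) →
    ∃ (e : Equiv.Perm (Fin m)) (f : Equiv.Perm (Fin n)),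
      ∀ a b, R' (e a) (f b) ↔ R a b

lemma unq_transpose {m n c d : ℕ} (h : Unq n m d c) : Unq m n c d := by
  intro R R' h1 h2 h3 h4
  obtain ⟨e, f, hef⟩ := h (fun b a => R a b) (fun b a => R' a b) h2 h1 h4 h3
  exact ⟨f, e, fun a b => hef b a⟩

lemma ncard_compl_row {N : ℕ} {s : Set (Fin N)} {c : ℕ} (h : s.ncard = c) :
    sᶜ.ncard = N - c := by
  have := Set.ncard_add_ncard_compl s
  rw [h, Nat.card_eq_fintype_card, Fintype.card_fin] at this
  omega

lemma unq_compl {m n c d : ℕ} (hc : c ≤ n) (hd : d ≤ m) (h : Unq m n c d) :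
    Unq m n (n - c) (m - d) := by
  intro R R' h1 h2 h3 h4
  have e1 : ∀ (T : Fin m → Fin n → Prop), (∀ a, {b | T a b}.ncard = n - c) →
      (∀ a, {b | ¬ T a b}.ncard = c) := by
    intro T hT a
    have := ncard_compl_row (hT a)
    have h2 : {b | ¬ T a b} = {b | T a b}ᶜ := rfl
    rw [h2, this]
    omega
  have e2 : ∀ (T : Fin m → Fin n → Prop), (∀ b, {a | T a b}.ncard = m - d) →
      (∀ b, {a | ¬ T a b}.ncard = d) := by
    intro T hT b
    have := ncard_compl_row (hT b)
    have h2 : {a | ¬ T a b} = {a | T a b}ᶜ := rfl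
    rw [h2, this]
    omega
  obtain ⟨e, f, hef⟩ := h (fun a b => ¬ R a b) (fun a b => ¬ R' a b)
    (e1 R h1) (e2 R h2) (e1 R' h3) (e2 R' h4)
  refine ⟨e, f, fun a b => ?_⟩
  have := hef a b
  tauto

lemma unq_of_c0 (m n d : ℕ) : Unq m n 0 d := by
  intro R R' h1 _ h3 _
  have hR : ∀ (T : Fin m → Fin n → Prop), (∀ a, {b | T a b}.ncard = 0) →
      ∀ a b, ¬ T a b := by
    intro T hT a b hab
    have : {b | T a b} = ∅ := (Set.ncard_eq_zero (Set.toFinite _)).mp (hT a)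
    rw [Set.eq_empty_iff_forall_notMem] at this
    exact this b hab
  exact ⟨1, 1, fun a b => iff_of_false (hR R' h3 _ _) (hR R h1 a b)⟩

lemma unq_of_cn (m n d : ℕ) : Unq m n n d := by
  intro R R' h1 _ h3 _
  have hR : ∀ (T : Fin m → Fin n → Prop), (∀ a, {b | T a b}.ncard = n) →
      ∀ a b, T a b := by
    intro T hT a b
    have : {b | T a b} = Set.univ := by
      apply Set.eq_of_subset_of_ncard_le (Set.subset_univ _)
      rw [hT a, Set.ncard_univ, Nat.card_eq_fintype_card, Fintype.card_fin]
    exact (Set.eq_univ_iff_forall.mp this) b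
  exact ⟨1, 1, fun a b => iff_of_true (hR R' h3 _ _) (hR R h1 a b)⟩

lemma unq_of_c1 (m n d : ℕ) : Unq m n 1 d := by
  intro R R' h1 h2 h3 h4
  choose gR hgR using fun a => Set.ncard_eq_one.mp (h1 a)
  choose gR' hgR' using fun a => Set.ncard_eq_one.mp (h3 a)
  have hR : ∀ a b, R a b ↔ gR a = b := by
    intro a b
    rw [show (R a b) = (b ∈ {b | R a b}) from rfl, hgR a, Set.mem_singleton_iff, eq_comm]
  have hR' : ∀ a b, R' a b ↔ gR' a = b := by
    intro a b
    rw [show (R' a b) = (b ∈ {b | R' a b}) from rfl, hgR' a, Set.mem_singleton_iff, eq_comm]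
  have hfib : ∀ b, Fintype.card {a // gR a = b} = d := by
    intro b
    have hs : {a | gR a = b} = {a | R a b} := by
      ext a; simp [hR]
    rw [← Nat.card_eq_fintype_card]
    have : Nat.card {a // gR a = b} = ({a | gR a = b} : Set (Fin m)).ncard :=
      Nat.card_coe_set_eq _
    rw [this, hs, h2 b]
  have hfib' : ∀ b, Fintype.card {a // gR' a = b} = d := by
    intro b
    have hs : {a | gR' a = b} = {a | R' a b} := by
      ext a; simp [hR']
    rw [← Nat.card_eq_fintype_card]
    have : Nat.card {a // gR' a = b} = ({a | gR' a = b} : Set (Fin m)).ncard :=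
      Nat.card_coe_set_eq _
    rw [this, hs, h4 b]
  let φ : ∀ b, {a // gR a = b} ≃ {a // gR' a = b} := fun b =>
    Fintype.equivOfCardEq (by rw [hfib, hfib'])
  let e : Equiv.Perm (Fin m) :=
    (Equiv.sigmaFiberEquiv gR).symm.trans ((Equiv.sigmaCongrRight φ).trans
      (Equiv.sigmaFiberEquiv gR'))
  have he : ∀ a, gR' (e a) = gR a := fun a => (φ (gR a) ⟨a, rfl⟩).2
  refine ⟨e, 1, fun a b => ?_⟩
  show R' (e a) b ↔ R a b
  rw [hR', hR, he a]

lemma unq_of_cn1 (m n c d : ℕ) (hc : c ≤ n) (hd : d ≤ m) (hc1 : c = n - 1) (hn : 1 ≤ n) :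
    Unq m n c d := by
  have h := unq_compl (show 1 ≤ n from hn) (Nat.sub_le m d) (unq_of_c1 m n (m - d))
  have hn1 : n - 1 = c := hc1.symm
  have hmd : m - (m - d) = d := by omega
  rw [hn1, hmd] at h
  exact h

lemma unq_easy (m n c d : ℕ) (hc : c ≤ n) (hd : d ≤ m)
    (hyp : c = 0 ∨ c = 1 ∨ c = n - 1 ∨ c = n ∨ d = 0 ∨ d = 1 ∨ d = m - 1 ∨ d = m) :
    Unq m n c d := by
  rcases hyp with h|h|h|h|h|h|h|h
  · subst h; exact unq_of_c0 m n d
  · subst h; exact unq_of_c1 m n d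
  · rcases Nat.eq_zero_or_pos n with hn | hn
    · have : c = 0 := by omega
      subst this; exact unq_of_c0 m n d
    · exact unq_of_cn1 m n c d hc hd h hn
  · rw [h]; exact unq_of_cn m n d
  · subst h; exact unq_transpose (unq_of_c0 n m c)
  · subst h; exact unq_transpose (unq_of_c1 n m c)
  · rcases Nat.eq_zero_or_pos m with hm | hm
    · have : d = 0 := by omega
      subst this; exact unq_transpose (unq_of_c0 n m c)
    · exact unq_transpose (unq_of_cn1 n m d c hd hc h hm)
  · rw [h]; exact unq_transpose (unq_of_cn n m c)



/-! ### Interval subsets of `ZMod g` -/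

/-- the interval `{0, 1, ..., c₀ - 1}` in `ZMod g`. -/
def BI (g c₀ : ℕ) : Finset (ZMod g) := (range c₀).image (Nat.cast)

/-- the broken interval `{0, 1, ..., c₀ - 2, c₀}` in `ZMod g`. -/
def BJ (g c₀ : ℕ) : Finset (ZMod g) := insert ((c₀ : ℕ) : ZMod g) ((range (c₀-1)).image (Nat.cast))

lemma mem_BI {g c₀ : ℕ} [NeZero g] (hc : c₀ ≤ g) (u : ZMod g) :
    u ∈ BI g c₀ ↔ u.val < c₀ := by
  simp only [BI, mem_image, mem_range]
  constructor
  · rintro ⟨k, hk, rfl⟩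
    rwa [ZMod.val_cast_of_lt (lt_of_lt_of_le hk hc)]
  · intro hv
    exact ⟨u.val, hv, by simp [ZMod.natCast_val, ZMod.cast_id]⟩

lemma mem_BJ {g c₀ : ℕ} [NeZero g] (hc : c₀ < g) (u : ZMod g) :
    u ∈ BJ g c₀ ↔ u.val < c₀ - 1 ∨ u.val = c₀ := by
  simp only [BJ, mem_insert, mem_image, mem_range]
  constructor
  · rintro (rfl | ⟨k, hk, rfl⟩)
    · right; exact ZMod.val_cast_of_lt hc
    · left; rwa [ZMod.val_cast_of_lt (by omega)]
  · rintro hv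
    rcases hv with hv | hv
    · exact Or.inr ⟨u.val, hv, by simp [ZMod.natCast_val, ZMod.cast_id]⟩
    · left
      rw [← hv]
      simp [ZMod.natCast_val, ZMod.cast_id]

lemma card_BI {g c₀ : ℕ} [NeZero g] (hc : c₀ ≤ g) : (BI g c₀).card = c₀ := by
  rw [BI, Finset.card_image_of_injOn, Finset.card_range]
  intro x hx y hy hxy
  simp only [Finset.coe_range, Set.mem_Iio] at hx hy
  have := congrArg ZMod.val hxy
  rwa [ZMod.val_cast_of_lt (by omega), ZMod.val_cast_of_lt (by omega)] at this

lemma card_BJ {g c₀ : ℕ} [NeZero g] (h2 : 2 ≤ c₀) (hc : c₀ < g) : (BJ g c₀).card = c₀ := by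
  rw [BJ, Finset.card_insert_of_notMem, Finset.card_image_of_injOn, Finset.card_range]
  · omega
  · intro x hx y hy hxy
    simp only [Finset.coe_range, Set.mem_Iio] at hx hy
    have := congrArg ZMod.val hxy
    rwa [ZMod.val_cast_of_lt (by omega), ZMod.val_cast_of_lt (by omega)] at this
  · simp only [mem_image, mem_range]
    rintro ⟨k, hk, hkc⟩
    have := congrArg ZMod.val hkc
    rw [ZMod.val_cast_of_lt (by omega), ZMod.val_cast_of_lt hc] at this
    omega

lemma zero_mem_BI {g c₀ : ℕ} [NeZero g] (h1 : 1 ≤ c₀) (hc : c₀ ≤ g) : (0 : ZMod g) ∈ BI g c₀ := by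
  rw [mem_BI hc, ZMod.val_zero]; omega

/-- Key rigidity: the interval has trivial "stabilizer". -/
lemma I_stab {g c₀ : ℕ} [NeZero g] (h1 : 1 ≤ c₀) (h2 : 2*c₀ ≤ g) {i i' : ZMod g}
    (h : ∀ j : ZMod g, (j - i ∈ BI g c₀) ↔ (j - i' ∈ BI g c₀)) : i = i' := by
  have hcg : c₀ ≤ g := by omega
  have h0 : i - i' ∈ BI g c₀ := by
    have := (h i).mp (by simpa using zero_mem_BI h1 hcg)
    simpa using this
  rw [mem_BI hcg] at h0
  have h3 : i + ((c₀ - 1 : ℕ) : ZMod g) - i ∈ BI g c₀ := by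
    simp only [add_sub_cancel_left]
    rw [mem_BI hcg, ZMod.val_cast_of_lt (by omega)]
    omega
  have h4 := (h (i + ((c₀ - 1 : ℕ) : ZMod g))).mp h3
  have h5 : i + ((c₀ - 1 : ℕ) : ZMod g) - i' = (i - i') + ((c₀ - 1 : ℕ) : ZMod g) := by ring
  rw [h5, mem_BI hcg] at h4
  rw [ZMod.val_add_of_lt] at h4
  · rw [ZMod.val_cast_of_lt (by omega)] at h4
    have : (i - i').val = 0 := by omega
    have := (ZMod.val_eq_zero _).mp this
    have : i = i' := by
      have h6 : i - i' = 0 := this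
      have := sub_eq_zero.mp h6
      exact this
    exact this
  · rw [ZMod.val_cast_of_lt (by omega)]
    omega

/-- Key rigidity: the interval is never a translate of the broken interval. -/
lemma I_ne_J {g c₀ : ℕ} [NeZero g] (h1 : 2 ≤ c₀) (h2 : 2*c₀ ≤ g) {i i' : ZMod g}
    (h : ∀ j : ZMod g, (j - i ∈ BI g c₀) ↔ (j - i' ∈ BJ g c₀)) : False := by
  have hcg : c₀ ≤ g := by omega
  have hclt : c₀ < g := by omega
  -- j := i' : 0 ∈ BJ
  have h0 : i' - i ∈ BI g c₀ := by
    apply (h i').mpr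
    rw [sub_self, mem_BJ hclt, ZMod.val_zero]
    omega
  rw [mem_BI hcg] at h0
  -- j := i' + c₀ : c₀ ∈ BJ
  have h3 : i' + ((c₀ : ℕ) : ZMod g) - i' ∈ BJ g c₀ := by
    simp only [add_sub_cancel_left]
    rw [mem_BJ hclt, ZMod.val_cast_of_lt hclt]
    omega
  have h4 := (h (i' + ((c₀ : ℕ) : ZMod g))).mpr h3
  have h5 : i' + ((c₀ : ℕ) : ZMod g) - i = (i' - i) + ((c₀ : ℕ) : ZMod g) := by ring
  rw [h5, mem_BI hcg] at h4
  rw [ZMod.val_add_of_lt] at h4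
  · rw [ZMod.val_cast_of_lt hclt] at h4
    omega
  · rw [ZMod.val_cast_of_lt hclt]
    omega




/-! ### shift counting lemmas -/

lemma ncard_sub_right_mem {g : ℕ} [NeZero g] (S : Finset (ZMod g)) (i : ZMod g) :
    {j : ZMod g | j - i ∈ S}.ncard = S.card := by
  classical
  have h1 : {j : ZMod g | j - i ∈ S} = ↑(S.image (fun u => u + i)) := by
    ext j
    simp only [Set.mem_setOf_eq, Finset.coe_image, Set.mem_image, Finset.mem_coe]
    constructor
    · intro hj; exact ⟨j - i, hj, by ring⟩
    · rintro ⟨u, hu, rfl⟩; simpa using hu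
  rw [h1, Set.ncard_coe_finset, Finset.card_image_of_injective _ (add_left_injective i)]

lemma ncard_sub_left_mem {g : ℕ} [NeZero g] (S : Finset (ZMod g)) (j : ZMod g) :
    {i : ZMod g | j - i ∈ S}.ncard = S.card := by
  classical
  have h1 : {i : ZMod g | j - i ∈ S} = ↑(S.image (fun u => j - u)) := by
    ext i
    simp only [Set.mem_setOf_eq, Finset.coe_image, Set.mem_image, Finset.mem_coe]
    constructor
    · intro hi; exact ⟨j - i, hi, by ring⟩
    · rintro ⟨u, hu, rfl⟩; simpa using hu
  rw [h1, Set.ncard_coe_finset, Finset.card_image_of_injective _ sub_right_injective]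

/-! ### block circulant graphs -/

def RelS {g mt nt : ℕ} (S : Fin mt → Fin nt → Finset (ZMod g)) :
    (ZMod g × Fin mt) → (ZMod g × Fin nt) → Prop := fun a b => b.1 - a.1 ∈ S a.2 b.2

lemma degRow_RelS {g mt nt c₀ : ℕ} [NeZero g] (S : Fin mt → Fin nt → Finset (ZMod g))
    (hS : ∀ x y, (S x y).card = c₀) : DegRow (RelS S) (nt * c₀) := by
  classical
  intro a
  have h1 : {b : ZMod g × Fin nt | RelS S a b} =
      ↑(univ.filter fun b : ZMod g × Fin nt => b.1 - a.1 ∈ S a.2 b.2) := by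
    ext b; simp [RelS]
  rw [h1, Set.ncard_coe_finset, Finset.card_filter, Fintype.sum_prod_type, Finset.sum_comm]
  have h2 : ∀ y : Fin nt, (∑ j : ZMod g, if j - a.1 ∈ S a.2 y then 1 else 0) = c₀ := by
    intro y
    rw [← Finset.card_filter]
    have h3 : univ.filter (fun j : ZMod g => j - a.1 ∈ S a.2 y)
        = (S a.2 y).image (fun u => u + a.1) := by
      ext j
      simp only [mem_filter, mem_univ, true_and, mem_image]
      constructor
      · intro hj; exact ⟨j - a.1, hj, by ring⟩
      · rintro ⟨u, hu, rfl⟩; simpa using hu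
    rw [h3, Finset.card_image_of_injective _ (add_left_injective a.1), hS]
  rw [Finset.sum_congr rfl (fun y _ => h2 y)]
  simp [mul_comm]

lemma degCol_RelS {g mt nt c₀ : ℕ} [NeZero g] (S : Fin mt → Fin nt → Finset (ZMod g))
    (hS : ∀ x y, (S x y).card = c₀) : DegCol (RelS S) (mt * c₀) := by
  classical
  intro b
  have h1 : {a : ZMod g × Fin mt | RelS S a b} =
      ↑(univ.filter fun a : ZMod g × Fin mt => b.1 - a.1 ∈ S a.2 b.2) := by
    ext a; simp [RelS]
  rw [h1, Set.ncard_coe_finset, Finset.card_filter, Fintype.sum_prod_type, Finset.sum_comm]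
  have h2 : ∀ x : Fin mt, (∑ i : ZMod g, if b.1 - i ∈ S x b.2 then 1 else 0) = c₀ := by
    intro x
    rw [← Finset.card_filter]
    have h3 : univ.filter (fun i : ZMod g => b.1 - i ∈ S x b.2)
        = (S x b.2).image (fun u => b.1 - u) := by
      ext i
      simp only [mem_filter, mem_univ, true_and, mem_image]
      constructor
      · intro hi; exact ⟨b.1 - i, hi, by ring⟩
      · rintro ⟨u, hu, rfl⟩; simpa using hu
    rw [h3, Finset.card_image_of_injective _ sub_right_injective, hS]
  rw [Finset.sum_congr rfl (fun x _ => h2 x)]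
  simp [mul_comm]

/-! ### the disjoint-union graph for the square case -/

def RelG2 (cc gg' : ℕ) : (Fin cc ⊕ ZMod gg') → (Fin cc ⊕ ZMod gg') → Prop
  | Sum.inl _, Sum.inl _ => True
  | Sum.inl _, Sum.inr _ => False
  | Sum.inr _, Sum.inl _ => False
  | Sum.inr i, Sum.inr j => j - i ∈ BI gg' cc

lemma degRow_RelG2 {cc gg' : ℕ} [NeZero gg'] (hcard : (BI gg' cc).card = cc) :
    DegRow (RelG2 cc gg') cc := by
  intro a
  match a with
  | Sum.inl u =>
    have h1 : {b | RelG2 cc gg' (Sum.inl u) b} = Sum.inl '' (Set.univ : Set (Fin cc)) := by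
      ext b
      match b with
      | Sum.inl v => simp [RelG2]
      | Sum.inr j => simp [RelG2]
    rw [h1, Set.ncard_image_of_injective _ Sum.inl_injective, Set.ncard_univ,
      Nat.card_eq_fintype_card, Fintype.card_fin]
  | Sum.inr i =>
    have h1 : {b | RelG2 cc gg' (Sum.inr i) b} = Sum.inr '' {j : ZMod gg' | j - i ∈ BI gg' cc} := by
      ext b
      match b with
      | Sum.inl v => simp [RelG2]
      | Sum.inr j => simp [RelG2]
    rw [h1, Set.ncard_image_of_injective _ Sum.inr_injective, ncard_sub_right_mem, hcard]

lemma degCol_RelG2 {cc gg' : ℕ} [NeZero gg'] (hcard : (BI gg' cc).card = cc) :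
    DegCol (RelG2 cc gg') cc := by
  intro b
  match b with
  | Sum.inl v =>
    have h1 : {a | RelG2 cc gg' a (Sum.inl v)} = Sum.inl '' (Set.univ : Set (Fin cc)) := by
      ext a
      match a with
      | Sum.inl u => simp [RelG2]
      | Sum.inr i => simp [RelG2]
    rw [h1, Set.ncard_image_of_injective _ Sum.inl_injective, Set.ncard_univ,
      Nat.card_eq_fintype_card, Fintype.card_fin]
  | Sum.inr j =>
    have h1 : {a | RelG2 cc gg' a (Sum.inr j)} = Sum.inr '' {i : ZMod gg' | j - i ∈ BI gg' cc} := by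
      ext a
      match a with
      | Sum.inl u => simp [RelG2]
      | Sum.inr i => simp [RelG2]
    rw [h1, Set.ncard_image_of_injective _ Sum.inr_injective, ncard_sub_left_mem, hcard]


/-! ### twin structure of the constructions -/

lemma allTwin_RelS_const {g mt nt c₀ : ℕ} (hmt : 2 ≤ mt) :
    AllTwin (RelS (fun (_ : Fin mt) (_ : Fin nt) => BI g c₀)) := by
  intro a
  have h0 : (0 : ℕ) < mt := by omega
  have h1 : (1 : ℕ) < mt := by omega
  refine ⟨(a.1, if a.2 = ⟨0, h0⟩ then ⟨1, h1⟩ else ⟨0, h0⟩), ?_, fun b => Iff.rfl⟩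
  intro hEq
  have h2 := congrArg Prod.snd hEq
  simp only at h2
  split at h2
  · rename_i hx
    rw [hx] at h2
    exact absurd (congrArg Fin.val h2) (by simp)
  · rename_i hx
    exact hx h2

lemma notExTwin_RelS_one {g c₀ : ℕ} [NeZero g] (h1 : 1 ≤ c₀) (h2 : 2*c₀ ≤ g) :
    ¬ ExTwin (RelS (fun (_ : Fin 1) (_ : Fin 1) => BI g c₀)) := by
  rintro ⟨⟨i, x⟩, ⟨i', x'⟩, hne, htw⟩
  have hx : x = x' := Subsingleton.elim _ _
  have hii : i = i' := by
    apply I_stab h1 h2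
    intro j
    exact htw (j, x)
  exact hne (by rw [hx, hii])

lemma exTwin_RelG2 {cc gg' : ℕ} (h2 : 2 ≤ cc) : ExTwin (RelG2 cc gg') := by
  refine ⟨Sum.inl ⟨0, by omega⟩, Sum.inl ⟨1, by omega⟩, ?_, fun b => ?_⟩
  · intro hEq
    have := Sum.inl_injective hEq
    exact absurd (congrArg Fin.val this) (by simp)
  · match b with
    | Sum.inl v => exact Iff.rfl
    | Sum.inr j => exact Iff.rfl

/-- the modified block circulant for `c₀ ≥ 2` : row `x₀` gets the interval,
all other rows the broken interval. -/
lemma notAllTwin_RelS_rowswap {g mt nt c₀ : ℕ} [NeZero g]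
    (hmt : 2 ≤ mt) (hnt : 1 ≤ nt) (hc₀ : 2 ≤ c₀) (h2c : 2*c₀ ≤ g) :
    ¬ AllTwin (RelS (fun (x : Fin mt) (_ : Fin nt) =>
        if x = ⟨0, by omega⟩ then BI g c₀ else BJ g c₀)) := by
  intro hA
  set x0 : Fin mt := ⟨0, by omega⟩ with hx0
  obtain ⟨⟨i', x'⟩, hne, htw⟩ := hA ((0 : ZMod g), x0)
  have y0 : Fin nt := ⟨0, by omega⟩
  by_cases hx : x' = x0
  · have key : ∀ j : ZMod g, (j - 0 ∈ BI g c₀) ↔ (j - i' ∈ BI g c₀) := by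
      intro j
      have := htw (j, y0)
      simp only [RelS, hx, if_pos rfl] at this
      exact this
    have : (0 : ZMod g) = i' := I_stab (by omega) h2c key
    exact hne (by rw [hx, ← this])
  · have key : ∀ j : ZMod g, (j - 0 ∈ BI g c₀) ↔ (j - i' ∈ BJ g c₀) := by
      intro j
      have := htw (j, y0)
      simp only [RelS, if_pos rfl, if_neg hx] at this
      exact this
    exact I_ne_J hc₀ h2c key

/-- the modified block circulant for `c₀ = 1` : a single entry becomes `{1}`. -/
lemma notAllTwin_RelS_entry {g mt nt : ℕ} [NeZero g]
    (hmt : 2 ≤ mt) (hnt : 2 ≤ nt) (hg : 2 ≤ g) :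
    ¬ AllTwin (RelS (fun (x : Fin mt) (y : Fin nt) =>
        if x = ⟨0, by omega⟩ ∧ y = ⟨0, by omega⟩ then {((1:ℕ) : ZMod g)} else BI g 1)) := by
  intro hA
  obtain ⟨⟨i', x'⟩, hne, htw⟩ := hA ((0 : ZMod g), ⟨0, by omega⟩)
  have hy10 : (⟨1, (by omega : (1:ℕ) < nt)⟩ : Fin nt) ≠ ⟨0, by omega⟩ := by
    intro hEq; exact absurd (congrArg Fin.val hEq) (by simp)
  have hmemBI : ∀ u : ZMod g, u ∈ BI g 1 ↔ u = 0 := by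
    intro u
    rw [mem_BI (by omega)]
    exact ⟨fun hu => (ZMod.val_eq_zero u).mp (by omega),
      fun hu => by rw [hu, ZMod.val_zero]; omega⟩
  have hone_ne : ((1:ℕ) : ZMod g) ≠ 0 := by
    intro hEq
    have := congrArg ZMod.val hEq
    rw [ZMod.val_cast_of_lt (by omega), ZMod.val_zero] at this
    omega
  have hi' : i' = 0 := by
    have h1 := htw ((0 : ZMod g), ⟨1, by omega⟩)
    simp only [RelS] at h1
    split_ifs at h1 with hC1 hC2 hC2
    · exact absurd hC1.2 hy10
    · exact absurd hC1.2 hy10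
    · exact absurd hC2.2 hy10
    · have h3 := h1.mp (by rw [sub_zero]; exact (hmemBI 0).mpr rfl)
      have h4 := (hmemBI _).mp h3
      rw [zero_sub, neg_eq_zero] at h4
      exact h4
  by_cases hx : x' = ⟨0, by omega⟩
  · exact hne (by rw [hx, hi'])
  · have h1 := htw (((1:ℕ) : ZMod g), ⟨0, by omega⟩)
    simp only [RelS] at h1
    split_ifs at h1 with hC1 hC2 hC2
    · exact absurd hC2.1 hx
    · have h3 := h1.mp (by rw [sub_zero]; exact Finset.mem_singleton_self _)
      rw [hi', sub_zero] at h3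
      exact hone_ne ((hmemBI _).mp h3)
    · exact absurd (by simp) hC1
    · exact absurd (by simp) hC1

/-! ### transporting a pair of non-equivalent graphs to `Fin` types -/

lemma pair_transport {V₁ W₁ V₂ W₂ : Type} [Fintype V₁] [Fintype W₁] [Fintype V₂] [Fintype W₂]
    {m n c d : ℕ}
    (hV1 : Fintype.card V₁ = m) (hW1 : Fintype.card W₁ = n)
    (hV2 : Fintype.card V₂ = m) (hW2 : Fintype.card W₂ = n)
    (R1 : V₁ → W₁ → Prop) (R2 : V₂ → W₂ → Prop)
    (h1 : DegRow R1 c) (h2 : DegCol R1 d) (h3 : DegRow R2 c) (h4 : DegCol R2 d)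
    (hsep : ∀ (e : V₁ ≃ V₂) (f : W₁ ≃ W₂), ¬(∀ a b, R2 (e a) (f b) ↔ R1 a b)) :
    ¬ Unq m n c d := by
  intro hU
  let α1 : Fin m ≃ V₁ := Fintype.equivOfCardEq (by rw [Fintype.card_fin, hV1])
  let β1 : Fin n ≃ W₁ := Fintype.equivOfCardEq (by rw [Fintype.card_fin, hW1])
  let α2 : Fin m ≃ V₂ := Fintype.equivOfCardEq (by rw [Fintype.card_fin, hV2])
  let β2 : Fin n ≃ W₂ := Fintype.equivOfCardEq (by rw [Fintype.card_fin, hW2])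
  obtain ⟨e, f, hef⟩ := hU (fun a b => R1 (α1 a) (β1 b)) (fun a b => R2 (α2 a) (β2 b))
    (degRow_transfer α1 β1 (fun _ _ => Iff.rfl) h1)
    (degCol_transfer α1 β1 (fun _ _ => Iff.rfl) h2)
    (degRow_transfer α2 β2 (fun _ _ => Iff.rfl) h3)
    (degCol_transfer α2 β2 (fun _ _ => Iff.rfl) h4)
  apply hsep (α1.symm.trans (e.trans α2)) (β1.symm.trans (f.trans β2))
  intro a b
  have := hef (α1.symm a) (β1.symm b)
  simpa using this

/-! ### the three hard cases -/

lemma hard_alpha (g mt nt c₀ : ℕ) (hg : 0 < g) (hmt : 2 ≤ mt) (hnt : 1 ≤ nt)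
    (hc₀ : 1 ≤ c₀) (h2c : 2*c₀ ≤ g) (hc1 : c₀ = 1 → 2 ≤ nt) :
    ¬ Unq (g*mt) (g*nt) (nt*c₀) (mt*c₀) := by
  haveI : NeZero g := ⟨by omega⟩
  have hcards : ∀ k : ℕ, Fintype.card (ZMod g × Fin k) = g * k := by
    intro k
    rw [Fintype.card_prod, ZMod.card, Fintype.card_fin]
  rcases eq_or_lt_of_le hc₀ with hone | htwo
  · -- c₀ = 1
    have hnt2 : 2 ≤ nt := hc1 hone.symm
    subst hone
    refine pair_transport (hcards mt) (hcards nt) (hcards mt) (hcards nt)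
      (RelS (fun (_ : Fin mt) (_ : Fin nt) => BI g 1))
      (RelS (fun (x : Fin mt) (y : Fin nt) =>
        if x = ⟨0, by omega⟩ ∧ y = ⟨0, by omega⟩ then {((1:ℕ) : ZMod g)} else BI g 1))
      (degRow_RelS _ (fun _ _ => card_BI (by omega)))
      (degCol_RelS _ (fun _ _ => card_BI (by omega)))
      (degRow_RelS _ (fun x y => by
        split
        · exact Finset.card_singleton _
        · exact card_BI (by omega)))
      (degCol_RelS _ (fun x y => by
        split
        · exact Finset.card_singleton _
        · exact card_BI (by omega)))
      ?_
    intro e f heq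
    have hT1 : AllTwin (RelS (fun (_ : Fin mt) (_ : Fin nt) => BI g 1)) :=
      allTwin_RelS_const hmt
    have hT2 := notAllTwin_RelS_entry (g := g) hmt hnt2 (by omega)
    exact hT2 ((allTwin_transfer e f heq).mp hT1)
  · -- 2 ≤ c₀
    refine pair_transport (hcards mt) (hcards nt) (hcards mt) (hcards nt)
      (RelS (fun (_ : Fin mt) (_ : Fin nt) => BI g c₀))
      (RelS (fun (x : Fin mt) (_ : Fin nt) =>
        if x = ⟨0, by omega⟩ then BI g c₀ else BJ g c₀))
      (degRow_RelS _ (fun _ _ => card_BI (by omega)))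
      (degCol_RelS _ (fun _ _ => card_BI (by omega)))
      (degRow_RelS _ (fun x y => by
        split
        · exact card_BI (by omega)
        · exact card_BJ (by omega) (by omega)))
      (degCol_RelS _ (fun x y => by
        split
        · exact card_BI (by omega)
        · exact card_BJ (by omega) (by omega)))
      ?_
    intro e f heq
    have hT1 : AllTwin (RelS (fun (_ : Fin mt) (_ : Fin nt) => BI g c₀)) :=
      allTwin_RelS_const hmt
    have hT2 := notAllTwin_RelS_rowswap (g := g) hmt hnt htwo h2c
    exact hT2 ((allTwin_transfer e f heq).mp hT1)

lemma hard_square (cc gg : ℕ) (h2 : 2 ≤ cc) (h2c : 2*cc ≤ gg) : ¬ Unq gg gg cc cc := by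
  haveI : NeZero gg := ⟨by omega⟩
  haveI : NeZero (gg - cc) := ⟨by omega⟩
  have hd1 : DegRow (RelS (fun (_ : Fin 1) (_ : Fin 1) => BI gg cc)) cc := by
    have := degRow_RelS (fun (_ : Fin 1) (_ : Fin 1) => BI gg cc)
      (fun _ _ => card_BI (show cc ≤ gg by omega))
    rwa [one_mul] at this
  have hd2 : DegCol (RelS (fun (_ : Fin 1) (_ : Fin 1) => BI gg cc)) cc := by
    have := degCol_RelS (fun (_ : Fin 1) (_ : Fin 1) => BI gg cc)
      (fun _ _ => card_BI (show cc ≤ gg by omega))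
    rwa [one_mul] at this
  have hcardBI : (BI (gg - cc) cc).card = cc := card_BI (by omega)
  refine pair_transport (m := gg) (n := gg) (c := cc) (d := cc)
      (by rw [Fintype.card_prod, ZMod.card, Fintype.card_fin, mul_one])
      (by rw [Fintype.card_prod, ZMod.card, Fintype.card_fin, mul_one])
      (by rw [Fintype.card_sum, ZMod.card, Fintype.card_fin]; omega)
      (by rw [Fintype.card_sum, ZMod.card, Fintype.card_fin]; omega)
      (RelS (fun (_ : Fin 1) (_ : Fin 1) => BI gg cc)) (RelG2 cc (gg - cc))
      hd1 hd2 (degRow_RelG2 hcardBI) (degCol_RelG2 hcardBI) ?_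
  intro e f heq
  have hT1 := notExTwin_RelS_one (g := gg) (show 1 ≤ cc by omega) h2c
  have hT2 := exTwin_RelG2 (gg' := gg - cc) h2
  exact hT1 ((exTwin_transfer e f heq).mpr hT2)

/-! ### assembling the hard direction -/

lemma hard_core (g mt nt c₀ : ℕ) (hg : 0 < g) (hmt : 1 ≤ mt) (hnt : 1 ≤ nt)
    (hc₀ : 1 ≤ c₀) (h2c : 2*c₀ ≤ g)
    (hcex : nt*c₀ ≠ 1) (hdex : mt*c₀ ≠ 1) :
    ¬ Unq (g*mt) (g*nt) (nt*c₀) (mt*c₀) := by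
  rcases Nat.lt_or_ge mt 2 with hmt2 | hmt2
  · have hmt1 : mt = 1 := by omega
    subst hmt1
    rcases Nat.lt_or_ge nt 2 with hnt2 | hnt2
    · -- square case
      have hnt1 : nt = 1 := by omega
      subst hnt1
      have hcc : 2 ≤ c₀ := by omega
      intro hU
      apply hard_square c₀ g hcc h2c
      simpa [mul_one, one_mul] using hU
    · -- transpose
      intro hU
      have hU' : Unq (g*nt) (g*1) (1*c₀) (nt*c₀) := unq_transpose hU
      have hc1' : c₀ = 1 → 2 ≤ (1:ℕ) := fun hcon => by subst hcon; omega
      exact hard_alpha g nt 1 c₀ hg hnt2 (by omega) hc₀ h2c hc1' hU'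
  · exact hard_alpha g mt nt c₀ hg hmt2 hnt hc₀ h2c (fun hcon => by subst hcon; omega)

lemma hard (m n c d : ℕ) (hmc : m * c = n * d)
    (hc2 : 2 ≤ c) (hcn : c + 2 ≤ n) (hd2 : 2 ≤ d) (hdm : d + 2 ≤ m) :
    ¬ Unq m n c d := by
  have hm : 0 < m := by omega
  have hn : 0 < n := by omega
  have hg : 0 < Nat.gcd m n := Nat.gcd_pos_of_pos_left n hm
  set g := Nat.gcd m n with hgdef
  obtain ⟨mt, hmt⟩ : g ∣ m := Nat.gcd_dvd_left m n
  obtain ⟨nt, hnt⟩ : g ∣ n := Nat.gcd_dvd_right m n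
  have hmt0 : 0 < mt := by
    rcases Nat.eq_zero_or_pos mt with h0 | h0
    · rw [h0, mul_zero] at hmt; omega
    · exact h0
  have hnt0 : 0 < nt := by
    rcases Nat.eq_zero_or_pos nt with h0 | h0
    · rw [h0, mul_zero] at hnt; omega
    · exact h0
  have hcop : Nat.Coprime mt nt := by
    have h1 := Nat.coprime_div_gcd_div_gcd (m := m) (n := n) hg
    have h2 : m / g = mt := by rw [hmt]; exact Nat.mul_div_cancel_left mt hg
    have h3 : n / g = nt := by rw [hnt]; exact Nat.mul_div_cancel_left nt hg
    rwa [h2, h3] at h1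
  have hmtnt : mt * c = nt * d := by
    have h2 : g * (mt * c) = g * (nt * d) := by
      rw [← mul_assoc, ← mul_assoc, ← hmt, ← hnt]; exact hmc
    exact Nat.eq_of_mul_eq_mul_left hg h2
  have hntc : nt ∣ c := (hcop.symm).dvd_of_dvd_mul_left ⟨d, hmtnt⟩
  obtain ⟨c₀, hc₀⟩ := hntc
  have hd₀ : d = mt * c₀ := by
    have h2 : nt * (mt * c₀) = nt * d := by
      rw [← hmtnt, hc₀]; ring
    exact (Nat.eq_of_mul_eq_mul_left hnt0 h2).symm
  have hc₀1 : 1 ≤ c₀ := by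
    rcases Nat.eq_zero_or_pos c₀ with h0 | h0
    · rw [h0, mul_zero] at hc₀; omega
    · exact h0
  have hc₀g : c₀ < g := by
    by_contra hcon
    push_neg at hcon
    have : n ≤ c := by
      rw [hnt, hc₀, mul_comm g nt]
      exact Nat.mul_le_mul_left nt hcon
    omega
  have hcex : nt * c₀ ≠ 1 := by rw [← hc₀]; omega
  have hdex : mt * c₀ ≠ 1 := by rw [← hd₀]; omega
  rcases le_or_gt (2*c₀) g with h2c | h2c
  · have hh := hard_core g mt nt c₀ hg hmt0 hnt0 hc₀1 h2c hcex hdex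
    rw [← hmt, ← hnt, ← hc₀, ← hd₀] at hh
    exact hh
  · -- pass to the bipartite complement
    intro hU
    have hU2 : Unq m n (n - c) (m - d) := unq_compl (by omega) (by omega) hU
    have hnc : n - c = nt * (g - c₀) := by
      rw [hnt, hc₀, Nat.mul_sub, mul_comm g nt]
    have hmd : m - d = mt * (g - c₀) := by
      rw [hmt, hd₀, Nat.mul_sub, mul_comm g mt]
    have hcex' : nt * (g - c₀) ≠ 1 := by rw [← hnc]; omega
    have hdex' : mt * (g - c₀) ≠ 1 := by rw [← hmd]; omega
    have hh := hard_core g mt nt (g - c₀) hg hmt0 hnt0 (by omega) (by omega) hcex' hdex'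
    rw [← hmt, ← hnt, ← hnc, ← hmd] at hh
    exact hh hU2

end BR

theorem biregular_unigraph_iff (m n c d : ℕ) (hc : c ≤ n) (hd : d ≤ m)
    (h : m * c = n * d) :
    (∀ R R' : Fin m → Fin n → Prop,
        (∀ a, {b : Fin n | R a b}.ncard = c) → (∀ b, {a : Fin m | R a b}.ncard = d) →
        (∀ a, {b : Fin n | R' a b}.ncard = c) → (∀ b, {a : Fin m | R' a b}.ncard = d) →
        ∃ (e : Equiv.Perm (Fin m)) (f : Equiv.Perm (Fin n)),
          ∀ a b, R' (e a) (f b) ↔ R a b) ↔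
      (c = 0 ∨ c = 1 ∨ c = n - 1 ∨ c = n ∨ d = 0 ∨ d = 1 ∨ d = m - 1 ∨ d = m) := by
  constructor
  · intro hU
    by_contra hcon
    push_neg at hcon
    obtain ⟨h1, h2, h3, h4, h5, h6, h7, h8⟩ := hcon
    exact BR.hard m n c d h (by omega) (by omega) (by omega) (by omega) hU
  · intro hyp
    exact BR.unq_easy m n c d hc hd hyp

end ColorRef
end
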